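/- arXiv:2311.16731 — 6 statements merged into one kernel-verified Lean document; each statement's English description precedes it below -/
import Mathlib

section
/- (Slope sufficient condition for Hölder metric regularity) Let X and Y be complete metric spaces, F : X ⇒ Y with closed graph, (x̄,ȳ) ∈ gph F, and q ∈ (0,1]. Suppose there exist τ > 0, δ > 0, μ > 0, γ > 0 such that for all x ∈ B_{δ+μ}(x̄), y ∈ B_δ(ȳ) with x ∉ F⁻¹(y), and all z ∈ F(x) with d(y,z) < (τμ)^{1/q}, one has limsup over (u,v) ∈ gph F with (u,v) → (x,z), (u,v) ≠ (x,z), d(u,x̄) < δ+μ, d(v,y) < (τμ)^{1/q} of (d(z,y)^q − d(v,y)^q)/d_γ((u,v),(x,z)) ≥ τ. Then F is metrically regular of order q at (x̄,ȳ): τ·d(x,F⁻¹(y)) ≤ d(y,F(x))^q for all x ∈ B_δ(x̄), y ∈ B_δ(ȳ) with d(y,F(x))^q < τμ. -/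
open Metric EMetric ENNReal Set Filter Topology

noncomputable section

/-- The inverse of a set-valued mapping. -/
def SVInv {X Y : Type*} (F : X → Set Y) : Y → Set X := fun y => {x | y ∈ F x}

/-- The graph of a set-valued mapping. -/
def SVGraph {X Y : Type*} (F : X → Set Y) : Set (X × Y) := {p | p.2 ∈ F p.1}

/-- The parametric (maximum) distance `d_γ` on a product of metric spaces. -/
def pdist {X Y : Type*} [MetricSpace X] [MetricSpace Y] (γ : ℝ) (p p' : X × Y) : ℝ :=
  max (dist p.1 p'.1) (γ * dist p.2 p'.2)

section pd
variable {X Y : Type*} [MetricSpace X] [MetricSpace Y] {γ : ℝ}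

lemma pdist_nonneg (p p' : X × Y) : 0 ≤ pdist γ p p' :=
  le_trans dist_nonneg (le_max_left _ _)

lemma pdist_self (p : X × Y) : pdist γ p p = 0 := by
  simp [pdist]

lemma dist_fst_le_pdist (p p' : X × Y) : dist p.1 p'.1 ≤ pdist γ p p' := le_max_left _ _

lemma mul_dist_snd_le_pdist (p p' : X × Y) : γ * dist p.2 p'.2 ≤ pdist γ p p' := le_max_right _ _

lemma pdist_triangle (hγ : 0 ≤ γ) (a b c : X × Y) :
    pdist γ a c ≤ pdist γ a b + pdist γ b c := by
  have h1 : dist a.1 c.1 ≤ pdist γ a b + pdist γ b c :=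
    (dist_triangle _ b.1 _).trans (add_le_add (dist_fst_le_pdist a b) (dist_fst_le_pdist b c))
  have h2 : γ * dist a.2 c.2 ≤ pdist γ a b + pdist γ b c := by
    have := dist_triangle a.2 b.2 c.2
    have h := mul_le_mul_of_nonneg_left this hγ
    rw [mul_add] at h
    exact h.trans (add_le_add (mul_dist_snd_le_pdist a b) (mul_dist_snd_le_pdist b c))
  exact max_le h1 h2

lemma eq_of_pdist_le_zero (hγ : 0 < γ) {p p' : X × Y} (h : pdist γ p p' ≤ 0) : p = p' := by
  have h1 : dist p.1 p'.1 ≤ 0 := (dist_fst_le_pdist p p').trans h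
  have h2 : γ * dist p.2 p'.2 ≤ 0 := (mul_dist_snd_le_pdist p p').trans h
  have h2' : dist p.2 p'.2 ≤ 0 := by nlinarith [dist_nonneg (x := p.2) (y := p'.2)]
  have e1 : p.1 = p'.1 := by rwa [← dist_le_zero]
  have e2 : p.2 = p'.2 := by rwa [← dist_le_zero]
  exact Prod.ext e1 e2

lemma pdist_pos (hγ : 0 < γ) {p p' : X × Y} (h : p ≠ p') : 0 < pdist γ p p' := by
  rcases lt_or_eq_of_le (pdist_nonneg (γ := γ) p p') with h' | h'
  · exact h'
  · exact absurd (eq_of_pdist_le_zero hγ h'.symm.le) h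

lemma continuous_pdist_left (p₀ : X × Y) : Continuous fun p : X × Y => pdist γ p p₀ :=
  ((continuous_fst.dist continuous_const).max
    (continuous_const.mul (continuous_snd.dist continuous_const)))

end pd

/-- Ekeland-type variational principle for the parametric metric `pdist γ`. -/
lemma ekeland_pdist {X Y : Type*} [MetricSpace X] [MetricSpace Y]
    [CompleteSpace X] [CompleteSpace Y]
    {γ : ℝ} (hγ : 0 < γ) {S : Set (X × Y)} (hS : IsClosed S)
    (f : X × Y → ℝ) (hf : Continuous f) (hf0 : ∀ p ∈ S, 0 ≤ f p)
    {p₀ : X × Y} (hp₀ : p₀ ∈ S) {κ : ℝ} (hκ : 0 < κ) :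
    ∃ p ∈ S, (f p + κ * pdist γ p p₀ ≤ f p₀) ∧
      ∀ w ∈ S, w ≠ p → f p < f w + κ * pdist γ w p := by
  classical
  set Rel : X × Y → X × Y → Prop := fun w p => w ∈ S ∧ f w + κ * pdist γ w p ≤ f p with hRel
  have hrefl : ∀ p ∈ S, Rel p p := fun p hp => ⟨hp, by simp [pdist_self]⟩
  have htrans : ∀ {a b c : X × Y}, Rel a b → Rel b c → Rel a c := by
    rintro a b c ⟨haS, hab⟩ ⟨hbS, hbc⟩
    refine ⟨haS, ?_⟩
    have ht := mul_le_mul_of_nonneg_left (pdist_triangle (γ := γ) hγ.le a b c) hκ.le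
    rw [mul_add] at ht
    linarith
  set T : X × Y → Set (X × Y) := fun p => {w | Rel w p} with hT
  have hTne : ∀ p ∈ S, (f '' T p).Nonempty := fun p hp => ⟨f p, p, hrefl p hp, rfl⟩
  have hTbdd : ∀ p : X × Y, BddBelow (f '' T p) := by
    intro p
    refine ⟨0, ?_⟩
    rintro _ ⟨w, hw, rfl⟩
    exact hf0 w hw.1
  set i : X × Y → ℝ := fun p => sInf (f '' T p) with hi
  have hkey : ∀ (n : ℕ) (p : X × Y), p ∈ S → ∃ w, Rel w p ∧ f w < i p + (1/2 : ℝ) ^ n := by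
    intro n p hp
    have h : sInf (f '' T p) < i p + (1/2 : ℝ) ^ n := by
      have : (0:ℝ) < (1/2:ℝ)^n := by positivity
      simp only [hi]; linarith
    obtain ⟨a, ⟨w, hw, rfl⟩, ha⟩ := exists_lt_of_csInf_lt (hTne p hp) h
    exact ⟨w, hw, ha⟩
  choose! g hg1 hg2 using hkey
  set seq : ℕ → X × Y := fun n => Nat.rec p₀ (fun n p => g n p) n with hseq
  have hseq0 : seq 0 = p₀ := rfl
  have hseq_succ : ∀ n, seq (n+1) = g n (seq n) := fun n => rfl
  have hseqS : ∀ n, seq n ∈ S := by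
    intro n
    induction n with
    | zero => exact hp₀
    | succ n ih => rw [hseq_succ]; exact (hg1 n (seq n) ih).1
  have hstep : ∀ n, Rel (seq (n+1)) (seq n) := fun n => by
    rw [hseq_succ]; exact hg1 n (seq n) (hseqS n)
  have hstep2 : ∀ n, f (seq (n+1)) < i (seq n) + (1/2:ℝ)^n := fun n => by
    rw [hseq_succ]; exact hg2 n (seq n) (hseqS n)
  have hchain : ∀ n m, n ≤ m → Rel (seq m) (seq n) := by
    intro n m hnm
    induction m with
    | zero => rw [Nat.le_zero.mp hnm]; exact hrefl _ (hseqS 0)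
    | succ m ih =>
      rcases Nat.lt_or_ge n (m+1) with h | h
      · exact htrans (hstep m) (ih (Nat.lt_succ_iff.mp h))
      · have e : n = m + 1 := Nat.le_antisymm hnm h
        subst e; exact hrefl (seq (m + 1)) (hseqS (m + 1))
  have hfanti : Antitone fun n => f (seq n) := by
    apply antitone_nat_of_succ_le
    intro n
    have := (hstep n).2
    have h0 : 0 ≤ κ * pdist γ (seq (n+1)) (seq n) :=
      mul_nonneg hκ.le (pdist_nonneg _ _)
    linarith
  have hfbdd : BddBelow (range fun n => f (seq n)) := by
    refine ⟨0, ?_⟩; rintro _ ⟨n, rfl⟩; exact hf0 _ (hseqS n)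
  set L : ℝ := ⨅ n, f (seq n) with hL
  have hftend : Tendsto (fun n => f (seq n)) atTop (𝓝 L) := tendsto_atTop_ciInf hfanti hfbdd
  have hfL : ∀ n, L ≤ f (seq n) := fun n => ciInf_le hfbdd n
  have hpd_le : ∀ n m, n ≤ m → pdist γ (seq m) (seq n) ≤ (f (seq n) - L) / κ := by
    intro n m hnm
    have := (hchain n m hnm).2
    rw [le_div_iff₀ hκ]
    have := hfL m
    nlinarith [pdist_nonneg (γ := γ) (seq m) (seq n)]
  have hbtend : Tendsto (fun n => (f (seq n) - L) / κ) atTop (𝓝 0) := by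
    have : Tendsto (fun n => (f (seq n) - L) / κ) atTop (𝓝 ((L - L)/κ)) :=
      (hftend.sub tendsto_const_nhds).div_const κ
    simpa using this
  have pdcomm : ∀ a b : X × Y, pdist γ a b = pdist γ b a := by
    intro a b; simp [pdist, dist_comm]
  have hpdNnm : ∀ (N n m : ℕ), N ≤ n → N ≤ m →
      pdist γ (seq n) (seq m) ≤ (f (seq N) - L) / κ := by
    have hmono : ∀ (N a b : ℕ), N ≤ a → a ≤ b →
        pdist γ (seq b) (seq a) ≤ (f (seq N) - L) / κ := by
      intro N a b hNa hab
      refine (hpd_le a b hab).trans ?_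
      have h1 : f (seq a) ≤ f (seq N) := hfanti hNa
      have h2 : L ≤ f (seq a) := hfL a
      gcongr
    intro N n m hn hm
    rcases le_total n m with h | h
    · rw [pdcomm]; exact hmono N n m hn h
    · exact hmono N m n hm h
  have hc1 : CauchySeq fun n => (seq n).1 := by
    refine cauchySeq_of_le_tendsto_0 (fun N => (f (seq N) - L) / κ) ?_ hbtend
    intro n m N hn hm
    exact (dist_fst_le_pdist (seq n) (seq m)).trans (hpdNnm N n m hn hm)
  have hc2 : CauchySeq fun n => (seq n).2 := by
    refine cauchySeq_of_le_tendsto_0 (fun N => (f (seq N) - L) / κ / γ) ?_ ?_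
    · intro n m N hn hm
      rw [le_div_iff₀ hγ, mul_comm]
      exact (mul_dist_snd_le_pdist (seq n) (seq m)).trans (hpdNnm N n m hn hm)
    · simpa using hbtend.div_const γ
  obtain ⟨xs, hxs⟩ := cauchySeq_tendsto_of_complete hc1
  obtain ⟨ys, hys⟩ := cauchySeq_tendsto_of_complete hc2
  set ps : X × Y := (xs, ys) with hps
  have hseqtend : Tendsto seq atTop (𝓝 ps) := by
    have := hxs.prodMk_nhds hys
    simpa using this
  have hpsS : ps ∈ S := hS.mem_of_tendsto hseqtend (Eventually.of_forall hseqS)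
  have hRelps : ∀ n, Rel ps (seq n) := by
    intro n
    refine ⟨hpsS, ?_⟩
    have hcont : Tendsto (fun m => f (seq m) + κ * pdist γ (seq m) (seq n)) atTop
        (𝓝 (f ps + κ * pdist γ ps (seq n))) := by
      exact ((hf.tendsto ps).comp hseqtend).add
        ((tendsto_const_nhds.mul (((continuous_pdist_left (seq n)).tendsto ps).comp hseqtend)))
    refine le_of_tendsto hcont ?_
    filter_upwards [eventually_ge_atTop n] with m hm
    exact (hchain n m hm).2
  have hfps_le : ∀ n, f ps ≤ f (seq n) := by
    intro n
    have := (hRelps n).2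
    nlinarith [pdist_nonneg (γ := γ) ps (seq n)]
  refine ⟨ps, hpsS, ?_, ?_⟩
  · have := (hRelps 0).2
    rwa [hseq0] at this
  · intro w hwS hwne
    by_contra hcon
    push_neg at hcon
    have hRw : Rel w ps := ⟨hwS, hcon⟩
    have hRwn : ∀ n, Rel w (seq n) := fun n => htrans hRw (hRelps n)
    have hle : ∀ n : ℕ, f ps ≤ f w + (1/2:ℝ)^n := by
      intro n
      have h1 : i (seq n) ≤ f w := csInf_le (hTbdd (seq n)) ⟨w, hRwn n, rfl⟩
      have h2 := hstep2 n
      have h3 := hfps_le (n+1)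
      linarith
    have hfpw : f ps ≤ f w := by
      have htend : Tendsto (fun n : ℕ => f w + (1/2:ℝ)^n) atTop (𝓝 (f w + 0)) :=
        tendsto_const_nhds.add (tendsto_pow_atTop_nhds_zero_of_lt_one (by norm_num) (by norm_num))
      have := ge_of_tendsto htend (Eventually.of_forall hle)
      linarith
    have hpd0 : pdist γ w ps ≤ 0 := by
      have := hRw.2
      nlinarith
    exact hwne (eq_of_pdist_le_zero hγ hpd0)

set_option maxHeartbeats 2000000

theorem slope_sufficient_condition_holder_metric_regularity
    {X Y : Type*} [MetricSpace X] [MetricSpace Y] [CompleteSpace X] [CompleteSpace Y]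
    (F : X → Set Y) (hcl : IsClosed (SVGraph F)) (xb : X) (yb : Y) (hxy : yb ∈ F xb)
    (q : ℝ) (hq0 : 0 < q) (hq1 : q ≤ 1)
    (τ δ μ γ : ℝ) (hτ : 0 < τ) (hδ : 0 < δ) (hμ : 0 < μ) (hγ : 0 < γ)
    (hslope : ∀ x ∈ ball xb (δ + μ), ∀ y ∈ ball yb δ, x ∉ SVInv F y →
      ∀ z ∈ F x, dist y z < (τ * μ) ^ (1 / q) →
        (τ : EReal) ≤ Filter.limsup
          (fun p : X × Y =>
            (((dist z y ^ q - dist p.2 y ^ q) / pdist γ p (x, z) : ℝ) : EReal))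
          (𝓝[(SVGraph F ∩ (ball xb (δ + μ) ×ˢ ball y ((τ * μ) ^ (1 / q)))) \ {(x, z)}]
            (x, z))) :
    ∀ x ∈ ball xb δ, ∀ y ∈ ball yb δ,
      infEdist y (F x) ^ q < ENNReal.ofReal (τ * μ) →
      ENNReal.ofReal τ * infEdist x (SVInv F y) ≤ infEdist y (F x) ^ q := by
  intro x hx y hy hlt
  by_contra hcon
  push_neg at hcon
  obtain ⟨c, hc1, hc2⟩ := exists_between hcon
  have hcfin : c ≠ ⊤ := hc2.ne_top
  set r := infEdist y (F x) with hr
  have hrfin : r ≠ ⊤ := by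
    intro h
    rw [h, ENNReal.top_rpow_of_pos hq0] at hlt
    exact not_top_lt hlt
  set R := r.toReal with hR
  have hRnn : 0 ≤ R := ENNReal.toReal_nonneg
  set a := R ^ q with ha
  have hann : 0 ≤ a := Real.rpow_nonneg hRnn q
  have hra : r ^ q = ENNReal.ofReal a := by
    rw [← ENNReal.ofReal_toReal hrfin, ENNReal.ofReal_rpow_of_nonneg hRnn hq0.le]
  have hat : a < τ * μ := by
    rw [hra] at hlt
    exact (ENNReal.ofReal_lt_ofReal_iff_of_nonneg hann).mp hlt
  have hac : a < c.toReal := by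
    rw [hra] at hc1
    exact (ENNReal.ofReal_lt_iff_lt_toReal hann hcfin).mp hc1
  set t := min c.toReal (τ * μ) with ht
  have hat' : a < t := lt_min hac hat
  have ht0 : 0 < t := lt_of_le_of_lt hann hat'
  set ε := (a + t) / 2 with hε
  have hεa : a < ε := by rw [hε]; linarith
  have hεt : ε < t := by rw [hε]; linarith
  have hε0 : 0 < ε := lt_of_le_of_lt hann hεa
  have hετμ : ε < τ * μ := lt_of_lt_of_le hεt (min_le_right _ _)
  set m := max (τ * ε / t) (ε / μ) with hm
  have hm0 : 0 < m := lt_of_lt_of_le (by positivity) (le_max_left _ _)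
  have hmτ : m < τ := by
    apply max_lt
    · rw [div_lt_iff₀ ht0]; nlinarith
    · rw [div_lt_iff₀ hμ]; linarith
  set κ := (m + τ) / 2 with hκ
  have hκ0 : 0 < κ := by rw [hκ]; linarith
  have hmκ : m < κ := by rw [hκ]; linarith
  have hκτ : κ < τ := by rw [hκ]; linarith
  have hεκμ : ε < κ * μ := by
    have h1 : ε / μ < κ := lt_of_le_of_lt (le_max_right _ _) hmκ
    rw [div_lt_iff₀ hμ] at h1; linarith [mul_comm κ μ]
  have hτεκ : τ * ε / κ < t := by
    have h1 : τ * ε / t < κ := lt_of_le_of_lt (le_max_left _ _) hmκ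
    rw [div_lt_iff₀ ht0] at h1
    rw [div_lt_iff₀ hκ0]
    nlinarith
  -- pick z ∈ F x with dist y z ^ q < ε
  have hRε : R < ε ^ (1 / q) := by
    have h1 : (R ^ q) ^ (1 / q) < ε ^ (1 / q) :=
      Real.rpow_lt_rpow (Real.rpow_nonneg hRnn q) hεa (by positivity)
    rwa [← Real.rpow_mul hRnn, mul_one_div_cancel hq0.ne', Real.rpow_one] at h1
  have hrz : r < ENNReal.ofReal (ε ^ (1 / q)) := by
    rw [← ENNReal.ofReal_toReal hrfin]
    exact (ENNReal.ofReal_lt_ofReal_iff (by positivity)).mpr hRε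
  obtain ⟨z, hzF, hzd⟩ := infEdist_lt_iff.mp hrz
  have hdyz : dist y z < ε ^ (1 / q) := edist_lt_ofReal.mp hzd
  have hzq : dist y z ^ q < ε := by
    have h1 : dist y z ^ q < (ε ^ (1 / q)) ^ q := Real.rpow_lt_rpow dist_nonneg hdyz hq0
    rwa [← Real.rpow_mul hε0.le, one_div_mul_cancel hq0.ne', Real.rpow_one] at h1
  -- apply Ekeland
  set f : X × Y → ℝ := fun p => dist p.2 y ^ q with hfdef
  have hfc : Continuous f :=
    Continuous.rpow_const (continuous_snd.dist continuous_const) (fun _ => Or.inr hq0.le)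
  have hf0 : ∀ p ∈ SVGraph F, 0 ≤ f p := fun p _ => Real.rpow_nonneg dist_nonneg q
  have hp₀ : (x, z) ∈ SVGraph F := hzF
  obtain ⟨⟨u, v⟩, hpS, hp1, hp2⟩ := ekeland_pdist hγ hcl f hfc hf0 hp₀ hκ0
  have hfxz : f (x, z) < ε := by
    simpa [hfdef, dist_comm] using hzq
  have hfp_nonneg : 0 ≤ f (u, v) := hf0 _ hpS
  have hpd_nonneg : 0 ≤ pdist γ (u, v) (x, z) := pdist_nonneg _ _
  have hpdε : κ * pdist γ (u, v) (x, z) ≤ ε := by linarith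
  have hpdμ : pdist γ (u, v) (x, z) < μ := by
    have := lt_of_le_of_lt hpdε (by linarith : ε < κ * μ)
    exact lt_of_mul_lt_mul_left this hκ0.le
  have hd1 : dist u x ≤ pdist γ (u, v) (x, z) := dist_fst_le_pdist (u, v) (x, z)
  have hpball : u ∈ ball xb (δ + μ) := by
    rw [Metric.mem_ball] at hx ⊢
    have := dist_triangle u x xb
    have h2 : dist u x < μ := lt_of_le_of_lt hd1 hpdμ
    linarith
  have hfpε : f (u, v) < ε := by
    have hmn : 0 ≤ κ * pdist γ (u, v) (x, z) := mul_nonneg hκ0.le hpd_nonneg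
    linarith
  have hvy : dist y v < (τ * μ) ^ (1 / q) := by
    have h0 : dist y v ^ q < τ * μ := by
      rw [dist_comm]
      calc dist v y ^ q = f (u, v) := rfl
        _ < ε := hfpε
        _ < τ * μ := hετμ
    have h2 : (dist y v ^ q) ^ (1 / q) < (τ * μ) ^ (1 / q) :=
      Real.rpow_lt_rpow (Real.rpow_nonneg dist_nonneg q) h0 (by positivity)
    rwa [← Real.rpow_mul dist_nonneg, mul_one_div_cancel hq0.ne', Real.rpow_one] at h2
  have hvFu : v ∈ F u := hpS
  have hpinv : u ∈ SVInv F y := by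
    by_contra hnot
    have hls := hslope u hpball y hy hnot v hvFu hvy
    have hub : ∀ w ∈ (SVGraph F ∩ (ball xb (δ + μ) ×ˢ ball y ((τ * μ) ^ (1 / q)))) \ {(u, v)},
        (((dist v y ^ q - dist w.2 y ^ q) / pdist γ w (u, v) : ℝ) : EReal) ≤ (κ : EReal) := by
      intro w hw
      obtain ⟨⟨hwS, -⟩, hwne⟩ := hw
      have hwne' : w ≠ (u, v) := hwne
      have h2 := hp2 w hwS hwne'
      have hppos : 0 < pdist γ w (u, v) := pdist_pos hγ hwne'
      rw [EReal.coe_le_coe_iff, div_le_iff₀ hppos]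
      have hfw : f (u, v) < f w + κ * pdist γ w (u, v) := h2
      have : f w = dist w.2 y ^ q := rfl
      have : f (u, v) = dist v y ^ q := rfl
      nlinarith [hfw]
    have hlimsup : Filter.limsup
        (fun p : X × Y =>
          (((dist v y ^ q - dist p.2 y ^ q) / pdist γ p (u, v) : ℝ) : EReal))
        (𝓝[(SVGraph F ∩ (ball xb (δ + μ) ×ˢ ball y ((τ * μ) ^ (1 / q)))) \ {(u, v)}]
          (u, v)) ≤ (κ : EReal) :=
      Filter.limsup_le_of_le (by isBoundedDefault) (eventually_nhdsWithin_of_forall hub)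
    have hτκ : (τ : EReal) ≤ (κ : EReal) := le_trans hls hlimsup
    rw [EReal.coe_le_coe_iff] at hτκ
    linarith
  have hdxu : dist x u ≤ ε / κ := by
    rw [le_div_iff₀ hκ0, mul_comm, dist_comm]
    exact le_trans (mul_le_mul_of_nonneg_left hd1 hκ0.le) hpdε
  have hinf_le : infEdist x (SVInv F y) ≤ ENNReal.ofReal (ε / κ) := by
    refine le_trans (infEdist_le_edist_of_mem hpinv) ?_
    rw [edist_dist]
    exact ENNReal.ofReal_le_ofReal hdxu
  have hfin1 : ENNReal.ofReal τ * infEdist x (SVInv F y) ≤ ENNReal.ofReal (τ * (ε / κ)) := by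
    calc ENNReal.ofReal τ * infEdist x (SVInv F y)
        ≤ ENNReal.ofReal τ * ENNReal.ofReal (ε / κ) := mul_le_mul_right hinf_le _
      _ = ENNReal.ofReal (τ * (ε / κ)) := (ENNReal.ofReal_mul hτ.le).symm
  have hfin2 : ENNReal.ofReal (τ * (ε / κ)) ≤ c := by
    rw [← ENNReal.ofReal_toReal hcfin]
    apply ENNReal.ofReal_le_ofReal
    rw [← mul_div_assoc]
    exact le_trans hτεκ.le (min_le_left _ _)
  exact absurd hc2 (not_lt.mpr (le_trans hfin1 hfin2))


end
end

section
/- (Hölder Lyusternik–Graves theorem) Let X be a complete metric space, Y a linear space with a shift-invariant metric, F : X ⇒ Y, (x̄,ȳ) ∈ gph F with gph F closed near (x̄,ȳ), f : X → Y with f(x̄) = 0, and q ∈ (0,1]. Then rg^q(F+f)(x̄,ȳ) ≥ rg^q F(x̄,ȳ) − lip^q f(x̄), with the convention (+∞) − (+∞) = 0. -/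
open Metric EMetric ENNReal Set
open Filter

noncomputable section

/-- The modulus of metric regularity of order `q` of `F` at `(xb, yb)`:
the supremum of all (finite) `τ > 0` for which the regularity estimate holds on
some neighbourhood; `0` if the property fails. -/
def rgq {X Y : Type*} [MetricSpace X] [MetricSpace Y]
    (F : X → Set Y) (xb : X) (yb : Y) (q : ℝ) : ℝ≥0∞ :=
  sSup {τ : ℝ≥0∞ | 0 < τ ∧ τ ≠ ⊤ ∧ ∃ δ : ℝ, 0 < δ ∧ ∀ x ∈ ball xb δ, ∀ y ∈ ball yb δ,
    τ * infEdist x (SVInv F y) ≤ infEdist y (F x) ^ q}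

/-- The modulus of Hölder continuity of order `q` of a single-valued mapping `f` at `xb`:
the infimum of all (finite) `τ` with `d(f x, f x')^q ≤ τ d(x, x')` near `xb`;
`+∞` if no such `τ` exists. -/
def lipq {X Y : Type*} [MetricSpace X] [MetricSpace Y]
    (f : X → Y) (xb : X) (q : ℝ) : ℝ≥0∞ :=
  sInf {τ : ℝ≥0∞ | τ ≠ ⊤ ∧ ∃ δ : ℝ, 0 < δ ∧ ∀ x ∈ ball xb δ, ∀ x' ∈ ball xb δ,
    edist (f x) (f x') ^ q ≤ τ * edist x x'}

lemma rpow_root_le {a b : ℝ≥0∞} {q : ℝ} (hq : 0 < q) (h : a ^ q ≤ b) : a ≤ b ^ (1/q) := by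
  have h2 : (a ^ q) ^ (1/q) ≤ b ^ (1/q) := ENNReal.rpow_le_rpow h (by positivity)
  rwa [← ENNReal.rpow_mul, mul_one_div, div_self hq.ne', ENNReal.rpow_one] at h2

lemma lt_of_rpow_lt {a b : ℝ≥0∞} {q : ℝ} (hq : 0 < q) (h : a ^ q < b ^ q) : a < b := by
  by_contra hc
  exact absurd (ENNReal.rpow_le_rpow (not_lt.mp hc) hq.le) (not_le.mpr h)

lemma iterate_lemma
    {X Y : Type*} [MetricSpace X] [CompleteSpace X]
    [AddCommGroup Y] [MetricSpace Y]
    (hshift : ∀ a b c : Y, edist (a + c) (b + c) = edist a b)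
    (F : X → Set Y) (xb : X) (yb : Y)
    (f : X → Y) (q : ℝ) (hq0 : 0 < q)
    (δ₁ δ₂ ρ : ℝ)
    (τ lam' μ : ℝ≥0∞)
    (hτ0 : τ ≠ 0) (hτtop : τ ≠ ⊤)
    (hl0 : lam' ≠ 0) (hltop : lam' ≠ ⊤)
    (hμ0 : μ ≠ 0) (hμtop : μ ≠ ⊤)
    (hττ' : lam' + μ ≤ τ)
    (hreg : ∀ x ∈ ball xb δ₁, ∀ y ∈ ball yb δ₁,
      τ * infEdist x (SVInv F y) ≤ infEdist y (F x) ^ q)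
    (hHol : ∀ x ∈ ball xb δ₂, ∀ x' ∈ ball xb δ₂,
      edist (f x) (f x') ^ q ≤ lam' * edist x x')
    (hcl : IsClosed ({p : X × Y | p.2 ∈ F p.1} ∩ Metric.closedBall (xb, yb) ρ))
    (y : Y) (x₀ : X) (c : ℝ≥0∞) (hctop : c ≠ ⊤)
    (hs : infEdist (y - f x₀) (F x₀) ^ q < c)
    (hballX : ∀ x' : X, edist xb x' ≤ edist xb x₀ + c / μ →
      x' ∈ ball xb δ₁ ∧ x' ∈ ball xb δ₂ ∧ dist xb x' ≤ ρ)
    (hballY : ∀ x' : X, edist xb x' ≤ edist xb x₀ + c / μ →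
      (y - f x') ∈ ball yb δ₁ ∧ dist yb (y - f x') ≤ ρ) :
    ∃ z : X, (y - f z) ∈ F z ∧ edist x₀ z ≤ c / μ := by
  set τ' : ℝ≥0∞ := lam' + μ with hτ'def
  have hτ'0 : τ' ≠ 0 := by simp [hτ'def, hl0]
  have hτ'top : τ' ≠ ⊤ := by simp [hτ'def]; exact ⟨hltop, hμtop⟩
  set θ : ℝ≥0∞ := lam' / τ' with hθdef
  have hθ1 : θ < 1 := by
    rw [hθdef, ENNReal.div_lt_iff (Or.inl hτ'0) (Or.inl hτ'top), one_mul, hτ'def]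
    exact ENNReal.lt_add_right hltop hμ0
  have hθtop : θ ≠ ⊤ := (hθ1.trans ENNReal.one_lt_top).ne
  have hCtop : c / τ' ≠ ⊤ := (ENNReal.div_lt_top hctop hτ'0).ne
  have hone : θ + μ / τ' = 1 := by
    rw [hθdef, ENNReal.div_add_div_same, ← hτ'def, ENNReal.div_self hτ'0 hτ'top]
  have hsub : 1 - θ = μ / τ' := by
    rw [← hone, add_comm]; exact ENNReal.add_sub_cancel_right hθtop
  have hkey : (c / τ') / (1 - θ) = c / μ := by
    rw [hsub, div_eq_mul_inv (c/τ'), ENNReal.inv_div (Or.inl hτ'top) (Or.inl hτ'0),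
      div_eq_mul_inv c τ', div_eq_mul_inv τ' μ, mul_assoc, ← mul_assoc τ'⁻¹,
      ENNReal.inv_mul_cancel hτ'0 hτ'top, one_mul, ← div_eq_mul_inv]
  have hsumle : ∀ n : ℕ, (∑ k ∈ Finset.range n, θ ^ k) * (c / τ') ≤ c / μ := by
    intro n
    calc (∑ k ∈ Finset.range n, θ ^ k) * (c / τ') ≤ (∑' k : ℕ, θ ^ k) * (c / τ') :=
          mul_le_mul_left (ENNReal.sum_le_tsum _) _
      _ = c / μ := by
          rw [ENNReal.tsum_geometric, ← hkey, div_eq_mul_inv (c/τ'), mul_comm]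
  set Q : ℕ → X → Prop := fun n z =>
    infEdist (y - f z) (F z) ^ q < θ ^ n * c ∧
    edist x₀ z ≤ (∑ k ∈ Finset.range n, θ ^ k) * (c / τ') with hQdef
  have hregion : ∀ n z, Q n z → edist xb z ≤ edist xb x₀ + c / μ := by
    intro n z hz
    calc edist xb z ≤ edist xb x₀ + edist x₀ z := edist_triangle _ _ _
      _ ≤ edist xb x₀ + c / μ := add_le_add_right ((hz.2).trans (hsumle n)) _
  have hshift2 : ∀ a b : Y, edist (y - a) (y - b) = edist b a := by
    intro a b
    have := hshift (y - a) (y - b) (a + b - y)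
    have e1 : y - a + (a + b - y) = b := by abel
    have e2 : y - b + (a + b - y) = a := by abel
    rw [e1, e2] at this
    exact this.symm
  have step : ∀ n (z : X), Q n z → ∃ z' : X, Q (n+1) z' ∧ (y - f z) ∈ F z' ∧
      edist z z' < θ ^ n * (c / τ') := by
    intro n z hz
    have hzr := hregion n z hz
    obtain ⟨hz1, hz2, _⟩ := hballX z hzr
    obtain ⟨hzy, _⟩ := hballY z hzr
    have h1 : τ * infEdist z (SVInv F (y - f z)) < τ * (θ ^ n * (c / τ')) := by
      calc τ * infEdist z (SVInv F (y - f z)) ≤ infEdist (y - f z) (F z) ^ q :=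
            hreg z hz1 (y - f z) hzy
        _ < θ ^ n * c := hz.1
        _ = τ' * (θ ^ n * (c / τ')) := by
            rw [← mul_assoc, mul_comm τ' (θ ^ n), mul_assoc, ENNReal.mul_div_cancel hτ'0 hτ'top]
        _ ≤ τ * (θ ^ n * (c / τ')) := mul_le_mul_left hττ' _
    have h2 : infEdist z (SVInv F (y - f z)) < θ ^ n * (c / τ') :=
      (ENNReal.mul_lt_mul_iff_right hτ0 hτtop).mp h1
    obtain ⟨z', hz'mem, hz'd⟩ := infEdist_lt_iff.mp h2
    have hz'sum : edist x₀ z' ≤ (∑ k ∈ Finset.range (n+1), θ ^ k) * (c / τ') := by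
      calc edist x₀ z' ≤ edist x₀ z + edist z z' := edist_triangle _ _ _
        _ ≤ (∑ k ∈ Finset.range n, θ ^ k) * (c / τ') + θ ^ n * (c / τ') :=
            add_le_add hz.2 hz'd.le
        _ = (∑ k ∈ Finset.range (n+1), θ ^ k) * (c / τ') := by
            rw [Finset.sum_range_succ, add_mul]
    have hz'region : edist xb z' ≤ edist xb x₀ + c / μ := by
      calc edist xb z' ≤ edist xb x₀ + edist x₀ z' := edist_triangle _ _ _
        _ ≤ edist xb x₀ + c / μ := add_le_add_right (hz'sum.trans (hsumle (n+1))) _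
    obtain ⟨_, hz'2, _⟩ := hballX z' hz'region
    refine ⟨z', ⟨?_, hz'sum⟩, hz'mem, hz'd⟩
    calc infEdist (y - f z') (F z') ^ q
        ≤ edist (y - f z') (y - f z) ^ q :=
          ENNReal.rpow_le_rpow (infEdist_le_edist_of_mem hz'mem) hq0.le
      _ = edist (f z) (f z') ^ q := by rw [hshift2]
      _ ≤ lam' * edist z z' := hHol z hz2 z' hz'2
      _ < lam' * (θ ^ n * (c / τ')) := ENNReal.mul_lt_mul_right hl0 hltop hz'd
      _ = θ ^ (n+1) * c := by
          rw [hθdef, div_eq_mul_inv, div_eq_mul_inv, pow_succ]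
          ring
  choose! g hgQ hgmem hgd using step
  set u : ℕ → X := fun n => Nat.rec x₀ (fun k x => g k x) n with hudef
  have hu0 : u 0 = x₀ := rfl
  have husucc : ∀ n, u (n+1) = g n (u n) := fun n => rfl
  have hQ0 : Q 0 x₀ := by
    constructor
    · simpa using hs
    · simp
  have hQu : ∀ n, Q n (u n) := by
    intro n; induction n with
    | zero => exact hQ0
    | succ k ih => rw [husucc]; exact hgQ k (u k) ih
  have humem : ∀ n, (y - f (u n)) ∈ F (u (n+1)) := fun n => by
    rw [husucc]; exact hgmem n (u n) (hQu n)
  have hud : ∀ n, edist (u n) (u (n+1)) ≤ (c / τ') * θ ^ n := fun n => by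
    rw [husucc, mul_comm]; exact (hgd n (u n) (hQu n)).le
  have hcauchy : CauchySeq u := cauchySeq_of_edist_le_geometric θ (c / τ') hθ1 hCtop hud
  obtain ⟨a, ha⟩ := cauchySeq_tendsto_of_complete hcauchy
  have hdx₀a : edist x₀ a ≤ c / μ := by
    have := edist_le_of_edist_le_geometric_of_tendsto₀ θ (c / τ') hud ha
    rwa [hu0, hkey] at this
  have haregion : edist xb a ≤ edist xb x₀ + c / μ :=
    (edist_triangle _ _ _).trans (add_le_add_right hdx₀a _)
  obtain ⟨_, ha2, haρ⟩ := hballX a haregion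
  have htendy : Tendsto (fun n => y - f (u n)) atTop (nhds (y - f a)) := by
    rw [Metric.tendsto_atTop]
    intro ε hε
    have hεq : (0:ℝ≥0∞) < ENNReal.ofReal ε ^ q :=
      ENNReal.rpow_pos (ENNReal.ofReal_pos.mpr hε) ENNReal.ofReal_ne_top
    have htd : Tendsto (fun n => lam' * edist a (u n)) atTop (nhds 0) := by
      have h1 : Tendsto (fun n => edist a (u n)) atTop (nhds 0) := by
        have := (tendsto_const_nhds (x := a)).edist ha
        simpa using this
      have := ENNReal.Tendsto.const_mul h1 (Or.inr hltop)
      simpa using this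
    have hev : ∀ᶠ n in atTop, lam' * edist a (u n) < ENNReal.ofReal ε ^ q :=
      htd.eventually_lt_const hεq
    rw [Filter.eventually_atTop] at hev
    obtain ⟨N, hN⟩ := hev
    refine ⟨N, fun n hn => ?_⟩
    have h1 : edist (f a) (f (u n)) ^ q ≤ lam' * edist a (u n) :=
      hHol a ha2 (u n) (hballX (u n) (hregion n (u n) (hQu n))).2.1
    have h2 : edist (f a) (f (u n)) ^ q < ENNReal.ofReal ε ^ q := h1.trans_lt (hN n hn)
    have h3 : edist (f a) (f (u n)) < ENNReal.ofReal ε := lt_of_rpow_lt hq0 h2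
    have h4 : edist (y - f (u n)) (y - f a) = edist (f a) (f (u n)) := hshift2 _ _
    rw [dist_edist, h4]
    rw [edist_lt_ofReal] at h3
    rwa [dist_edist] at h3
  have hpair : Tendsto (fun n => (u (n+1), y - f (u n))) atTop (nhds (a, y - f a)) :=
    Tendsto.prodMk_nhds ((tendsto_add_atTop_iff_nat 1).mpr ha) htendy
  have hmem : ∀ n, (u (n+1), y - f (u n)) ∈
      ({p : X × Y | p.2 ∈ F p.1} ∩ Metric.closedBall (xb, yb) ρ) := by
    intro n
    refine ⟨humem n, ?_⟩
    rw [Metric.mem_closedBall, Prod.dist_eq]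
    have h1 := (hballX (u (n+1)) (hregion (n+1) (u (n+1)) (hQu (n+1)))).2.2
    have h2 := (hballY (u n) (hregion n (u n) (hQu n))).2
    exact max_le (by rwa [dist_comm] at h1) (by rwa [dist_comm] at h2)
  have hlim : (a, y - f a) ∈ ({p : X × Y | p.2 ∈ F p.1} ∩ Metric.closedBall (xb, yb) ρ) :=
    hcl.mem_of_tendsto hpair (Filter.Eventually.of_forall hmem)
  exact ⟨a, hlim.1, hdx₀a⟩

theorem holder_lyusternik_graves
    {X Y : Type*} [MetricSpace X] [CompleteSpace X]
    [AddCommGroup Y] [MetricSpace Y]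
    (hshift : ∀ a b c : Y, dist (a + c) (b + c) = dist a b)
    (F : X → Set Y) (xb : X) (yb : Y) (hxy : yb ∈ F xb)
    (hcl : ∃ ρ : ℝ, 0 < ρ ∧
      IsClosed ({p : X × Y | p.2 ∈ F p.1} ∩ Metric.closedBall (xb, yb) ρ))
    (f : X → Y) (hf0 : f xb = 0) (q : ℝ) (hq0 : 0 < q) (hq1 : q ≤ 1) :
    rgq F xb yb q - lipq f xb q ≤ rgq (fun x => (fun z => z + f x) '' F x) xb yb q := by
  obtain ⟨ρ, hρ, hclosed⟩ := hcl
  set G : X → Set Y := fun x => (fun z => z + f x) '' F x with hGdef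
  have hshifte : ∀ a b c : Y, edist (a + c) (b + c) = edist a b := by
    intro a b c; rw [edist_dist, edist_dist, hshift]
  have hshift2 : ∀ y a b : Y, edist (y - a) (y - b) = edist b a := by
    intro y a b
    have := hshifte (y - a) (y - b) (a + b - y)
    have e1 : y - a + (a + b - y) = b := by abel
    have e2 : y - b + (a + b - y) = a := by abel
    rw [e1, e2] at this
    exact this.symm
  have hGinv : ∀ y : Y, SVInv G y = {x : X | y - f x ∈ F x} := by
    intro y; ext x
    simp only [SVInv, hGdef, Set.mem_setOf_eq, Set.mem_image]
    constructor
    · rintro ⟨z, hz, hzy⟩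
      have : z = y - f x := by rw [← hzy]; abel
      rwa [← this]
    · intro h
      exact ⟨y - f x, h, by abel⟩
  have hGdist : ∀ (x : X) (y : Y), infEdist y (G x) = infEdist (y - f x) (F x) := by
    intro x y
    have hiso : Isometry (fun z : Y => z + f x) := fun a b => hshifte a b (f x)
    have h := EMetric.infEdist_image (x := y - f x) (t := F x) hiso
    have he : y - f x + f x = y := by abel
    rw [he] at h
    exact h
  rw [tsub_le_iff_right]
  refine sSup_le ?_
  rintro τ ⟨hτ0, hτtop, δ₁, hδ₁, hreg⟩
  have hcore : ∀ lam : ℝ≥0∞, (lam ≠ ⊤ ∧ ∃ δ : ℝ, 0 < δ ∧ ∀ x ∈ ball xb δ, ∀ x' ∈ ball xb δ,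
      edist (f x) (f x') ^ q ≤ lam * edist x x') → τ - lam ≤ rgq G xb yb q := by
    rintro lam ⟨hlamtop, δ₂, hδ₂, hHollam⟩
    by_contra hcon
    obtain ⟨μ, hμ1, hμ2⟩ := exists_between (not_le.mp hcon)
    refine absurd ?_ (not_le.mpr hμ1)
    have hμpos : 0 < μ := zero_le.trans_lt hμ1
    have hμtop : μ ≠ ⊤ := (hμ2.trans_le (tsub_le_self.trans hτtop.lt_top.le)).ne
    have hμlam : μ + lam < τ := lt_tsub_iff_right.mp hμ2
    set gp : ℝ≥0∞ := τ - (μ + lam) with hgpdef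
    have hgppos : 0 < gp := tsub_pos_iff_lt.mpr hμlam
    have hgptop : gp ≠ ⊤ := (tsub_le_self.trans_lt hτtop.lt_top).ne
    set lam' : ℝ≥0∞ := lam + gp / 2 with hlam'def
    have hl0 : lam' ≠ 0 := ((ENNReal.half_pos hgppos.ne').trans_le le_add_self).ne'
    have hltop : lam' ≠ ⊤ := by
      rw [hlam'def]
      exact ENNReal.add_ne_top.mpr ⟨hlamtop, (ENNReal.half_le_self.trans_lt hgptop.lt_top).ne⟩
    have hττ' : lam' + μ ≤ τ := by
      calc lam' + μ = (μ + lam) + gp / 2 := by rw [hlam'def]; ring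
        _ ≤ (μ + lam) + gp := add_le_add_right ENNReal.half_le_self _
        _ = τ := add_tsub_cancel_of_le hμlam.le
    have hHol' : ∀ x ∈ ball xb δ₂, ∀ x' ∈ ball xb δ₂,
        edist (f x) (f x') ^ q ≤ lam' * edist x x' := fun x hx x' hx' =>
      (hHollam x hx x' hx').trans (mul_le_mul_left le_self_add _)
    -- choose the radius δ
    set l : ℝ := lam'.toReal with hldef
    set m' : ℝ := (μ⁻¹).toReal with hm'def
    have hlnn : 0 ≤ l := ENNReal.toReal_nonneg
    have hm'nn : 0 ≤ m' := ENNReal.toReal_nonneg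
    set K : ℝ := min δ₁ (min δ₂ ρ) with hKdef
    have hK : 0 < K := lt_min hδ₁ (lt_min hδ₂ hρ)
    set r : ℝ → ℝ := fun δ => 2*δ + δ^q * m' with hrdef
    set s' : ℝ → ℝ := fun δ => δ + (l * r δ)^(1/q) with hs'def
    have hrc : ContinuousAt r 0 := by
      apply ContinuousAt.add
      · exact (continuous_const.mul continuous_id).continuousAt
      · exact (Real.continuousAt_rpow_const 0 q (Or.inr hq0.le)).mul continuousAt_const
    have hr0 : r 0 = 0 := by simp [hrdef, Real.zero_rpow hq0.ne']
    have hsc : ContinuousAt s' 0 := by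
      apply ContinuousAt.add continuousAt_id
      have houter : ContinuousAt (fun x : ℝ => x ^ (1/q)) (l * r 0) := by
        rw [hr0, mul_zero]
        exact Real.continuousAt_rpow_const 0 (1/q) (Or.inr (by positivity))
      have hinner : ContinuousAt (fun x : ℝ => l * r x) 0 := continuousAt_const.mul hrc
      exact ContinuousAt.rpow_const hinner (Or.inr (by positivity))
    have hs0 : s' 0 = 0 := by
      show (0:ℝ) + (l * r 0) ^ (1/q) = 0
      rw [hr0, mul_zero, Real.zero_rpow (by positivity : (1:ℝ)/q ≠ 0), add_zero]
    have h1 : ∀ᶠ δ in nhds (0:ℝ), r δ < K := by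
      have := hrc.tendsto; rw [hr0] at this; exact this.eventually_lt_const hK
    have h2 : ∀ᶠ δ in nhds (0:ℝ), s' δ < K := by
      have := hsc.tendsto; rw [hs0] at this; exact this.eventually_lt_const hK
    obtain ⟨δ, ⟨hrK, hsK⟩, hδ0'⟩ :=
      (((h1.and h2).filter_mono nhdsWithin_le_nhds).and self_mem_nhdsWithin).exists
        (f := nhdsWithin (0:ℝ) (Set.Ioi 0))
    have hδ0 : 0 < δ := hδ0'
    set D : ℝ≥0∞ := ENNReal.ofReal δ with hDdef
    have hD0 : D ≠ 0 := (ENNReal.ofReal_pos.mpr hδ0).ne'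
    have hDtop : D ≠ ⊤ := ENNReal.ofReal_ne_top
    have hDqtop : D ^ q ≠ ⊤ := ENNReal.rpow_ne_top_of_nonneg hq0.le hDtop
    have hrnn : 0 ≤ r δ := by
      show (0:ℝ) ≤ 2*δ + δ^q * m'
      have h1 : (0:ℝ) ≤ δ ^ q := Real.rpow_nonneg hδ0.le q
      nlinarith
    have hRbound : 2*D + D^q * μ⁻¹ = ENNReal.ofReal (r δ) := by
      show 2*D + D^q * μ⁻¹ = ENNReal.ofReal (2*δ + δ^q * m')
      rw [ENNReal.ofReal_add (by linarith) (mul_nonneg (Real.rpow_nonneg hδ0.le q) hm'nn),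
        ENNReal.ofReal_mul (by norm_num), ENNReal.ofReal_mul (Real.rpow_nonneg hδ0.le q),
        ← ENNReal.ofReal_rpow_of_pos hδ0, hm'def,
        ENNReal.ofReal_toReal (ENNReal.inv_ne_top.mpr hμpos.ne'), ENNReal.ofReal_ofNat]
    have hKle1 : K ≤ δ₁ := min_le_left _ _
    have hKle2 : K ≤ δ₂ := (min_le_right _ _).trans (min_le_left _ _)
    have hKle3 : K ≤ ρ := (min_le_right _ _).trans (min_le_right _ _)
    have hloc : ∀ x' : X, edist xb x' < ENNReal.ofReal (r δ) →
        x' ∈ ball xb δ₁ ∧ x' ∈ ball xb δ₂ ∧ dist xb x' ≤ ρ := by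
      intro x' h
      have hlt : dist xb x' < K :=
        edist_lt_ofReal.mp (h.trans_le (ENNReal.ofReal_le_ofReal hrK.le))
      refine ⟨?_, ?_, (hlt.trans_le hKle3).le⟩
      · rw [Metric.mem_ball, dist_comm]; exact hlt.trans_le hKle1
      · rw [Metric.mem_ball, dist_comm]; exact hlt.trans_le hKle2
    unfold rgq
    refine le_sSup ⟨hμpos, hμtop, δ, hδ0, ?_⟩
    intro x hx y hy
    rw [hGinv, hGdist]
    have hxD : edist xb x < D := by
      rw [hDdef, edist_lt_ofReal, dist_comm]; exact Metric.mem_ball.mp hx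
    have hyD : edist yb y < D := by
      rw [hDdef, edist_lt_ofReal, dist_comm]; exact Metric.mem_ball.mp hy
    have hlocy : ∀ x' : X, edist xb x' < ENNReal.ofReal (r δ) →
        (y - f x') ∈ ball yb δ₁ ∧ dist yb (y - f x') ≤ ρ := by
      intro x' h
      have hx'2 : x' ∈ ball xb δ₂ := (hloc x' h).2.1
      have hxb2 : xb ∈ ball xb δ₂ := Metric.mem_ball_self hδ₂
      have hfq : edist (f x') (f xb) ^ q ≤ lam' * edist x' xb := hHol' x' hx'2 xb hxb2
      have hf1 : edist (f x') (f xb) ≤ (lam' * edist x' xb) ^ (1/q) := rpow_root_le hq0 hfq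
      have hf2 : lam' * edist x' xb ≤ ENNReal.ofReal (l * r δ) := by
        rw [ENNReal.ofReal_mul hlnn, hldef, ENNReal.ofReal_toReal hltop]
        exact mul_le_mul_right (by rw [edist_comm]; exact h.le) _
      have hf3 : edist (f x') (f xb) ≤ ENNReal.ofReal ((l * r δ) ^ (1/q)) := by
        refine hf1.trans ?_
        rw [← ENNReal.ofReal_rpow_of_nonneg (mul_nonneg hlnn hrnn) (by positivity)]
        exact ENNReal.rpow_le_rpow hf2 (by positivity)
      have hyd : edist yb (y - f x') < ENNReal.ofReal (s' δ) := by
        have h5 : edist y (y - f x') = edist (f x') 0 := by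
          have := hshift2 y 0 (f x')
          rwa [sub_zero] at this
        calc edist yb (y - f x') ≤ edist yb y + edist y (y - f x') := edist_triangle _ _ _
          _ = edist yb y + edist (f x') (f xb) := by rw [h5, hf0]
          _ < D + ENNReal.ofReal ((l * r δ) ^ (1/q)) :=
              ENNReal.add_lt_add_of_lt_of_le (edist_ne_top _ _) hyD hf3
          _ = ENNReal.ofReal (s' δ) := by
              show _ = ENNReal.ofReal (δ + (l * r δ) ^ (1/q))
              rw [ENNReal.ofReal_add hδ0.le
                (Real.rpow_nonneg (mul_nonneg hlnn hrnn) _), hDdef]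
      have hydK : dist yb (y - f x') < K :=
        edist_lt_ofReal.mp (hyd.trans_le (ENNReal.ofReal_le_ofReal hsK.le))
      refine ⟨?_, (hydK.trans_le hKle3).le⟩
      rw [Metric.mem_ball, dist_comm]; exact hydK.trans_le hKle1
    set cmax : ℝ≥0∞ := μ * D + D ^ q with hcmaxdef
    have hcmaxtop : cmax ≠ ⊤ := by
      rw [hcmaxdef]
      exact ENNReal.add_ne_top.mpr ⟨ENNReal.mul_ne_top hμtop hDtop, hDqtop⟩
    rcases lt_or_ge (infEdist (y - f x) (F x) ^ q) cmax with hbr | hbr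
    · have hmain : ∀ c : ℝ≥0∞, infEdist (y - f x) (F x) ^ q < c → c ≤ cmax →
          μ * infEdist x {x' : X | y - f x' ∈ F x'} ≤ c := by
        intro c hc1 hc2
        have hctop : c ≠ ⊤ := (hc2.trans_lt hcmaxtop.lt_top).ne
        have hcdiv : c / μ ≤ D + D ^ q * μ⁻¹ := by
          calc c / μ ≤ cmax / μ := ENNReal.div_le_div_right hc2 μ
            _ = D + D ^ q * μ⁻¹ := by
                rw [hcmaxdef, ENNReal.add_div, mul_comm μ D, mul_div_assoc,
                  ENNReal.div_self hμpos.ne' hμtop, mul_one, div_eq_mul_inv]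
        have hregion1 : ∀ x' : X, edist xb x' ≤ edist xb x + c / μ →
            edist xb x' < ENNReal.ofReal (r δ) := by
          intro x' h
          calc edist xb x' ≤ edist xb x + c / μ := h
            _ < D + (D + D ^ q * μ⁻¹) :=
                ENNReal.add_lt_add_of_lt_of_le
                  ((ENNReal.div_lt_top hctop hμpos.ne').ne) hxD hcdiv
            _ = ENNReal.ofReal (r δ) := by rw [← hRbound]; ring
        obtain ⟨z, hz1, hz2⟩ := iterate_lemma hshifte F xb yb f q hq0 δ₁ δ₂ ρ τ lam' μ
          hτ0.ne' hτtop hl0 hltop hμpos.ne' hμtop hττ' hreg hHol' hclosed y x c hctop hc1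
          (fun x' h => hloc x' (hregion1 x' h)) (fun x' h => hlocy x' (hregion1 x' h))
        calc μ * infEdist x {x' : X | y - f x' ∈ F x'} ≤ μ * edist x z :=
              mul_le_mul_right
                (infEdist_le_edist_of_mem (show z ∈ {x' : X | y - f x' ∈ F x'} from hz1)) μ
          _ ≤ μ * (c / μ) := mul_le_mul_right hz2 μ
          _ = c := ENNReal.mul_div_cancel hμpos.ne' hμtop
      by_contra hcon2
      push_neg at hcon2
      obtain ⟨c, hc1, hc2⟩ := exists_between (lt_min hcon2 hbr)
      exact absurd (hmain c hc1 (lt_min_iff.mp hc2).2.le) (not_le.mpr (lt_min_iff.mp hc2).1)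
    · have hcs : infEdist (y - f xb) (F xb) ^ q < D ^ q := by
        rw [hf0, sub_zero]
        refine ENNReal.rpow_lt_rpow ?_ hq0
        exact (infEdist_le_edist_of_mem hxy).trans_lt (by rwa [edist_comm])
      have hregion2 : ∀ x' : X, edist xb x' ≤ edist xb xb + D ^ q / μ →
          edist xb x' < ENNReal.ofReal (r δ) := by
        intro x' h
        rw [edist_self, zero_add] at h
        calc edist xb x' ≤ D ^ q / μ := h
          _ < 2 * D + D ^ q * μ⁻¹ := by
              rw [div_eq_mul_inv, add_comm]
              refine ENNReal.lt_add_right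
                (ENNReal.mul_ne_top hDqtop (ENNReal.inv_ne_top.mpr hμpos.ne')) ?_
              simp [hD0]
          _ = ENNReal.ofReal (r δ) := hRbound
      obtain ⟨z, hz1, hz2⟩ := iterate_lemma hshifte F xb yb f q hq0 δ₁ δ₂ ρ τ lam' μ
        hτ0.ne' hτtop hl0 hltop hμpos.ne' hμtop hττ' hreg hHol' hclosed y xb (D ^ q) hDqtop hcs
        (fun x' h => hloc x' (hregion2 x' h)) (fun x' h => hlocy x' (hregion2 x' h))
      calc μ * infEdist x {x' : X | y - f x' ∈ F x'}
          ≤ μ * (edist x xb + edist xb z) :=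
            mul_le_mul_right
              ((infEdist_le_edist_of_mem (show z ∈ {x' : X | y - f x' ∈ F x'} from hz1)).trans
                (edist_triangle _ _ _)) μ
        _ ≤ μ * edist x xb + μ * (D ^ q / μ) := by
            rw [mul_add]; exact add_le_add_right (mul_le_mul_right hz2 μ) _
        _ ≤ μ * D + D ^ q := by
            refine add_le_add (mul_le_mul_right ?_ μ) ?_
            · rw [edist_comm]; exact hxD.le
            · rw [ENNReal.mul_div_cancel hμpos.ne' hμtop]
        _ ≤ infEdist (y - f x) (F x) ^ q := hbr
  -- assemble
  unfold lipq
  rw [add_comm, ENNReal.sInf_add]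
  refine le_iInf₂ fun lam hlam => ?_
  exact tsub_le_iff_left.mp (hcore lam hlam)

end
end

section
/- (Quadratic convergence of a Newton-type method for generalized equations) Let X, Y be Banach spaces, F : X ⇒ Y with closed graph, f : X → Y continuously Fréchet differentiable near x̄ with ∇f Lipschitz continuous at x̄, x̄ a solution of f(x) + F(x) ∋ 0, and suppose F + f is metrically regular at (x̄, 0). Then there exists δ > 0 such that for every solution x⋆ of f(x)+F(x) ∋ 0 with ‖x⋆ − x̄‖ < δ/2 and every starting point u with ‖u − x̄‖ < δ, there exists a sequence {x_k} in B_δ(x̄) with x₀ = u satisfying the Newton iteration f(x_k) + ∇f(x_k)(x_{k+1} − x_k) + F(x_{k+1}) ∋ 0 for all k, and converging quadratically to x⋆ (i.e. there is γ > 0 with ‖x_{k+1} − x⋆‖ ≤ γ‖x_k − x⋆‖² for all k). -/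
open Metric EMetric ENNReal Set Filter

noncomputable section

/-- `G` is metrically regular at `(xb, yb)`. -/
def MetReg {X Y : Type*} [MetricSpace X] [MetricSpace Y]
    (G : X → Set Y) (xb : X) (yb : Y) : Prop :=
  ∃ τ : ℝ, 0 < τ ∧ ∃ δ : ℝ, 0 < δ ∧ ∀ x ∈ ball xb δ, ∀ y ∈ ball yb δ,
    ENNReal.ofReal τ * infEdist x (SVInv G y) ≤ infEdist y (G x)

set_option maxHeartbeats 2000000

/-- Existence of one Newton step with a quadratic error bound. -/
lemma newton_step_aux
    {X Y : Type*} [NormedAddCommGroup X] [NormedSpace ℝ X] [CompleteSpace X]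
    [NormedAddCommGroup Y] [NormedSpace ℝ Y]
    (F : X → Set Y) (hcl : IsClosed {p : X × Y | p.2 ∈ F p.1})
    (f : X → Y) (xb : X)
    (τ δr lam δ : ℝ) (hτ : 0 < τ) (hlam : 0 < lam) (hδ : 0 < δ) (hδr : δ ≤ δr)
    (hdiff' : ∀ x ∈ ball xb δ, DifferentiableAt ℝ f x)
    (hlip' : ∀ x ∈ ball xb δ, ∀ x' ∈ ball xb δ,
      ‖fderiv ℝ f x - fderiv ℝ f x'‖ ≤ lam * ‖x - x'‖)
    (hreg : ∀ x ∈ ball xb δr, ∀ y ∈ ball (0 : Y) δr,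
      ENNReal.ofReal τ * infEdist x (SVInv (fun x => (fun z => f x + z) '' F x) y)
        ≤ infEdist y ((fun z => f x + z) '' F x))
    (hc1 : 2 * lam * δ ≤ τ / 4)
    (hc2 : 6 * lam * δ / τ ≤ 1 / 6)
    (hc3 : 4 * lam * δ ^ 2 < δr)
    (xs : X) (hsxs : -(f xs) ∈ F xs) (hxs : dist xs xb < δ / 2)
    (u : X) (hu : u ∈ ball xb δ) (hus : dist u xs ≤ 3 * δ / 2) :
    ∃ x : X, dist x xs ≤ (4 * lam / τ) * dist u xs ^ 2 ∧
      -(f u + fderiv ℝ f u (x - u)) ∈ F x := by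
  classical
  by_cases hue : u = xs
  · refine ⟨xs, by simp [hue], ?_⟩
    simpa [hue] using hsxs
  set L := fderiv ℝ f u with hL
  set G : X → Set Y := fun x => (fun z => f x + z) '' F x with hG
  have mem_G : ∀ (x : X) (y : Y), y ∈ G x ↔ y - f x ∈ F x := by
    intro x y
    constructor
    · rintro ⟨w, hw, rfl⟩; simpa using hw
    · intro h; exact ⟨y - f x, h, by show f x + (y - f x) = y; abel⟩
  set g : X → Y := fun z => f z - f u - L (z - u) with hg
  set a : ℝ := dist u xs with ha
  have ha0 : 0 < a := by
    simpa [ha, dist_pos] using hue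
  set Γ : ℝ := 4 * lam / τ with hΓ
  have hΓ0 : 0 < Γ := by positivity
  set B : ℕ → ℝ := fun n => Γ * a ^ 2 * (1 / 2) ^ n with hB
  have hB0 : ∀ n, 0 < B n := fun n => by positivity
  have hΓa : Γ * a ^ 2 ≤ δ / 4 := by
    have h1 : Γ * a ^ 2 ≤ Γ * (3 * δ / 2) * a := by
      have : a * a ≤ (3 * δ / 2) * a := by nlinarith
      calc Γ * a ^ 2 = Γ * (a * a) := by ring
        _ ≤ Γ * ((3 * δ / 2) * a) := by nlinarith
        _ = Γ * (3 * δ / 2) * a := by ring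
    have h2 : Γ * (3 * δ / 2) ≤ 1 / 6 := by
      have : Γ * (3 * δ / 2) = 6 * lam * δ / τ := by rw [hΓ]; ring
      linarith [hc2, this.le]
    nlinarith
  have hball : ∀ z : X, dist z xs ≤ Γ * a ^ 2 → z ∈ ball xb δ := by
    intro z hz
    have := dist_triangle z xs xb
    simp only [Metric.mem_ball]
    linarith
  -- mean-value estimate on segments
  have hseg : ∀ z ∈ ball xb δ, ∀ z' ∈ ball xb δ, ∀ C : ℝ,
      (∀ ζ ∈ segment ℝ z' z, ‖fderiv ℝ f ζ - L‖ ≤ C) →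
      ‖g z - g z'‖ ≤ C * ‖z - z'‖ := by
    intro z hz z' hz' C hC
    have hsub : segment ℝ z' z ⊆ ball xb δ :=
      (convex_ball xb δ).segment_subset hz' hz
    set h : X → Y := fun w => f w - L w with hh
    have hdiffh : ∀ ζ ∈ segment ℝ z' z, DifferentiableAt ℝ h ζ := by
      intro ζ hζ
      exact (hdiff' ζ (hsub hζ)).sub (L.differentiableAt)
    have hfd : ∀ ζ ∈ segment ℝ z' z, ‖fderiv ℝ h ζ‖ ≤ C := by
      intro ζ hζ
      have : fderiv ℝ h ζ = fderiv ℝ f ζ - L := by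
        rw [hh]
        rw [fderiv_fun_sub (hdiff' ζ (hsub hζ)) L.differentiableAt, L.fderiv]
      rw [this]; exact hC ζ hζ
    have := Convex.norm_image_sub_le_of_norm_fderiv_le hdiffh hfd
      (convex_segment z' z) (left_mem_segment ℝ z' z) (right_mem_segment ℝ z' z)
    have heq : h z - h z' = g z - g z' := by
      simp only [hh, hg, map_sub]; abel
    rw [heq] at this
    exact this
  have hTay : ∀ z ∈ ball xb δ, ‖g z‖ ≤ lam * dist z u ^ 2 := by
    intro z hz
    have hCb : ∀ ζ ∈ segment ℝ u z, ‖fderiv ℝ f ζ - L‖ ≤ lam * ‖z - u‖ := by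
      intro ζ hζ
      have hζb : ζ ∈ ball xb δ := (convex_ball xb δ).segment_subset hu hz hζ
      have h1 : ‖fderiv ℝ f ζ - L‖ ≤ lam * ‖ζ - u‖ := hlip' ζ hζb u hu
      have h2 : ‖ζ - u‖ ≤ ‖z - u‖ := by
        obtain ⟨p, q, hp, hq, hpq, rfl⟩ := hζ
        have : p • u + q • z - u = q • (z - u) := by
          have hp1 : p = 1 - q := by linarith
          rw [hp1]; module
        rw [this, norm_smul]
        simp only [Real.norm_eq_abs, abs_of_nonneg hq]
        nlinarith [norm_nonneg (z - u)]
      nlinarith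
    have h0 := hseg z hz u hu (lam * ‖z - u‖) hCb
    have hgu : g u = 0 := by simp [hg]
    calc ‖g z‖ = ‖g z - g u‖ := by rw [hgu, sub_zero]
      _ ≤ lam * ‖z - u‖ * ‖z - u‖ := h0
      _ ≤ lam * dist z u ^ 2 := by rw [dist_eq_norm]; nlinarith [norm_nonneg (z - u)]
  have hglip : ∀ z ∈ ball xb δ, ∀ z' ∈ ball xb δ,
      ‖g z - g z'‖ ≤ (2 * lam * δ) * ‖z - z'‖ := by
    intro z hz z' hz'
    refine hseg z hz z' hz' _ ?_
    intro ζ hζ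
    have hζb : ζ ∈ ball xb δ := (convex_ball xb δ).segment_subset hz' hz hζ
    have h1 : ‖fderiv ℝ f ζ - L‖ ≤ lam * ‖ζ - u‖ := hlip' ζ hζb u hu
    have h2 : ‖ζ - u‖ ≤ 2 * δ := by
      have := dist_triangle ζ xb u
      rw [← dist_eq_norm]
      simp only [Metric.mem_ball] at hζb hu
      rw [dist_comm xb u] at this
      linarith
    nlinarith
  -- the metric regularity "picking" lemma
  have hpick : ∀ z ∈ ball xb δ, ∀ y : Y, ‖y‖ < δr → ∀ c : ℝ, 0 ≤ c →
      infEdist y (G z) ≤ ENNReal.ofReal c → ∀ e : ℝ, c / τ < e →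
      ∃ w : X, y ∈ G w ∧ dist w z < e := by
    intro z hz y hy c hc hle e he
    have hzr : z ∈ ball xb δr := by
      simp only [Metric.mem_ball] at hz ⊢; linarith
    have hyr : y ∈ ball (0 : Y) δr := by
      simpa [Metric.mem_ball, dist_zero_right] using hy
    have hr := hreg z hzr y hyr
    have h1 : ENNReal.ofReal τ * infEdist z (SVInv G y) ≤ ENNReal.ofReal c :=
      le_trans hr hle
    have h2 : infEdist z (SVInv G y) ≤ ENNReal.ofReal c / ENNReal.ofReal τ := by
      rw [ENNReal.le_div_iff_mul_le (Or.inl (by simpa using hτ)) (Or.inl ofReal_ne_top)]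
      rw [mul_comm]; exact h1
    rw [← ENNReal.ofReal_div_of_pos hτ] at h2
    have h3 : infEdist z (SVInv G y) < ENNReal.ofReal e :=
      lt_of_le_of_lt h2 (by
        rw [ENNReal.ofReal_lt_ofReal_iff (lt_of_le_of_lt (by positivity) he)]
        exact he)
    obtain ⟨w, hw, hwd⟩ := EMetric.infEdist_lt_iff.mp h3
    exact ⟨w, hw, by rw [dist_comm]; exact edist_lt_ofReal.mp hwd⟩
  -- the inner iteration invariant
  set Inv : ℕ → X → X → Prop := fun n p q =>
    g p ∈ G q ∧ dist q p ≤ B (n + 1) ∧ dist p xs ≤ Γ * a ^ 2 * (1 - (1 / 2) ^ n)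
    with hInvDef
  have hxsball : xs ∈ ball xb δ := by
    simp only [Metric.mem_ball]; linarith
  -- base step
  have hbase : ∃ q, Inv 0 xs q := by
    have h0G : (0 : Y) ∈ G xs := (mem_G xs 0).mpr (by simpa using hsxs)
    have hgxs : ‖g xs‖ ≤ lam * a ^ 2 := by
      have := hTay xs hxsball
      rw [dist_comm] at this
      simpa [← ha] using this
    have hinf : infEdist (g xs) (G xs) ≤ ENNReal.ofReal (lam * a ^ 2) := by
      refine le_trans (infEdist_le_edist_of_mem h0G) ?_
      rw [edist_dist, dist_zero_right]
      exact ENNReal.ofReal_le_ofReal hgxs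
    have hgxsr : ‖g xs‖ < δr := by
      have haa : a ^ 2 ≤ 4 * δ ^ 2 := by
        nlinarith [mul_nonneg (by linarith : (0:ℝ) ≤ 3 * δ / 2 - a)
          (by linarith [ha0.le] : (0:ℝ) ≤ 3 * δ / 2 + a)]
      nlinarith [mul_le_mul_of_nonneg_left haa hlam.le]
    have hlt : lam * a ^ 2 / τ < B 1 := by
      have hB1 : B 1 = 2 * lam * a ^ 2 / τ := by
        simp only [hB, hΓ]; field_simp; ring
      rw [hB1]
      rw [div_lt_div_iff₀ hτ hτ]
      nlinarith [mul_pos (mul_pos hlam (pow_pos ha0 2)) hτ]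
    obtain ⟨w, hwG, hwd⟩ := hpick xs hxsball (g xs) hgxsr (lam * a ^ 2)
      (by positivity) hinf (B 1) hlt
    exact ⟨w, hwG, le_of_lt hwd, by simp⟩
  -- the induction step
  have hstep : ∀ n p q, Inv n p q → ∃ r, Inv (n + 1) q r := by
    intro n p q ⟨hpq, hdqp, hdpxs⟩
    have hBn : B (n + 1) = Γ * a ^ 2 * (1 / 2) ^ (n + 1) := rfl
    have hq_xs : dist q xs ≤ Γ * a ^ 2 * (1 - (1 / 2) ^ (n + 1)) := by
      have := dist_triangle q p xs
      have h2 : (Γ * a ^ 2 * (1 / 2) ^ (n + 1)) + Γ * a ^ 2 * (1 - (1 / 2) ^ n)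
          = Γ * a ^ 2 * (1 - (1 / 2) ^ (n + 1)) := by ring
      rw [hBn] at hdqp
      linarith
    have hq_xs' : dist q xs ≤ Γ * a ^ 2 := by
      have hpow : (0:ℝ) ≤ (1 / 2 : ℝ) ^ (n + 1) := by positivity
      nlinarith [mul_nonneg (mul_nonneg hΓ0.le (sq_nonneg a)) hpow]
    have hp_xs' : dist p xs ≤ Γ * a ^ 2 := by
      have hpow : (0:ℝ) ≤ (1 / 2 : ℝ) ^ n := by positivity
      nlinarith [mul_nonneg (mul_nonneg hΓ0.le (sq_nonneg a)) hpow]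
    have hqball : q ∈ ball xb δ := hball q hq_xs'
    have hpball : p ∈ ball xb δ := hball p hp_xs'
    have hinf : infEdist (g q) (G q) ≤ ENNReal.ofReal (2 * lam * δ * B (n + 1)) := by
      refine le_trans (infEdist_le_edist_of_mem hpq) ?_
      rw [edist_dist, dist_eq_norm]
      refine ENNReal.ofReal_le_ofReal ?_
      calc ‖g q - g p‖ ≤ (2 * lam * δ) * ‖q - p‖ := hglip q hqball p hpball
        _ ≤ 2 * lam * δ * B (n + 1) := by
            rw [← dist_eq_norm]
            exact mul_le_mul_of_nonneg_left hdqp (by positivity)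
    have hgqr : ‖g q‖ < δr := by
      have h1 : dist q u ≤ 2 * δ := by
        have := dist_triangle q xs u
        rw [dist_comm xs u] at this
        linarith [hΓa]
      have h2 := hTay q hqball
      have haa : dist q u ^ 2 ≤ 4 * δ ^ 2 := by
        nlinarith [mul_nonneg (by linarith [dist_nonneg (x := q) (y := u)] :
          (0:ℝ) ≤ 2 * δ - dist q u) (by linarith [dist_nonneg (x := q) (y := u)] :
          (0:ℝ) ≤ 2 * δ + dist q u)]
      nlinarith [mul_le_mul_of_nonneg_left haa hlam.le]
    have hlt : 2 * lam * δ * B (n + 1) / τ < B (n + 2) := by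
      have hB2 : B (n + 2) = B (n + 1) / 2 := by
        simp only [hB]; ring
      have h4 : 2 * lam * δ / τ ≤ 1 / 4 := by
        rw [div_le_div_iff₀ hτ (by norm_num : (0:ℝ) < 4)]; linarith
      calc 2 * lam * δ * B (n + 1) / τ = (2 * lam * δ / τ) * B (n + 1) := by ring
        _ ≤ (1 / 4) * B (n + 1) := mul_le_mul_of_nonneg_right h4 (hB0 (n + 1)).le
        _ < (1 / 2) * B (n + 1) := by nlinarith [hB0 (n + 1)]
        _ = B (n + 2) := by rw [hB2]; ring
    obtain ⟨w, hwG, hwd⟩ := hpick q hqball (g q) hgqr (2 * lam * δ * B (n + 1))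
      (by positivity) hinf (B (n + 2)) hlt
    exact ⟨w, hwG, le_of_lt hwd, hq_xs⟩
  -- build the sequence
  obtain ⟨q0, hq0⟩ := hbase
  let St : ∀ n : ℕ, {pq : X × X // Inv n pq.1 pq.2} → {pq : X × X // Inv (n + 1) pq.1 pq.2} :=
    fun n s => ⟨(s.1.2, Classical.choose (hstep n s.1.1 s.1.2 s.2)),
      Classical.choose_spec (hstep n s.1.1 s.1.2 s.2)⟩
  let w : ∀ n : ℕ, {pq : X × X // Inv n pq.1 pq.2} :=
    fun n => Nat.rec ⟨(xs, q0), hq0⟩ St n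
  let z : ℕ → X := fun n => (w n).1.1
  have hz0 : z 0 = xs := rfl
  have hzsucc : ∀ n, z (n + 1) = (w n).1.2 := fun n => rfl
  have hInv : ∀ n, Inv n (z n) (z (n + 1)) := fun n => (w n).2
  have hzd : ∀ n, dist (z n) (z (n + 1)) ≤ (Γ * a ^ 2 / 2) * (1 / 2) ^ n := by
    intro n
    have := (hInv n).2.1
    rw [dist_comm]
    calc dist (z (n + 1)) (z n) ≤ B (n + 1) := this
      _ = (Γ * a ^ 2 / 2) * (1 / 2) ^ n := by simp only [hB]; ring
  have hzxs : ∀ n, dist (z n) xs ≤ Γ * a ^ 2 := by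
    intro n
    have := (hInv n).2.2
    have hpow : (0:ℝ) ≤ (1 / 2 : ℝ) ^ n := by positivity
    nlinarith [mul_nonneg (mul_nonneg hΓ0.le (sq_nonneg a)) hpow]
  have hcauchy : CauchySeq z :=
    cauchySeq_of_le_geometric (1 / 2) (Γ * a ^ 2 / 2) (by norm_num) hzd
  obtain ⟨x, hx⟩ := cauchySeq_tendsto_of_complete hcauchy
  have hx_xs : dist x xs ≤ Γ * a ^ 2 := by
    have h1 : Tendsto (fun n => dist (z n) xs) atTop (nhds (dist x xs)) :=
      (hx.dist tendsto_const_nhds)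
    exact le_of_tendsto h1 (Filter.Eventually.of_forall hzxs)
  have hxball : x ∈ ball xb δ := hball x hx_xs
  -- pass to the limit in the inclusion
  have hzball : ∀ n, z n ∈ ball xb δ := fun n => hball (z n) (hzxs n)
  have hfc : Tendsto (fun n => f (z n)) atTop (nhds (f x)) :=
    ((hdiff' x hxball).continuousAt.tendsto).comp hx
  have hgc : Tendsto (fun n => g (z n)) atTop (nhds (g x)) := by
    have hLc : Tendsto (fun n => L (z n - u)) atTop (nhds (L (x - u))) :=
      (L.continuous.tendsto _).comp (hx.sub_const u)
    have : Tendsto (fun n => f (z n) - f u - L (z n - u)) atTop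
        (nhds (f x - f u - L (x - u))) := ((hfc.sub_const (f u)).sub hLc)
    exact this
  have hz1 : Tendsto (fun n => z (n + 1)) atTop (nhds x) :=
    hx.comp (tendsto_add_atTop_nat 1)
  have hmem : ∀ n, ((z (n + 1), g (z n) - f (z (n + 1))) : X × Y) ∈
      {p : X × Y | p.2 ∈ F p.1} := by
    intro n
    exact (mem_G (z (n + 1)) (g (z n))).mp (hInv n).1
  have hlimmem : ((x, g x - f x) : X × Y) ∈ {p : X × Y | p.2 ∈ F p.1} := by
    have hf1 : Tendsto (fun n => f (z (n + 1))) atTop (nhds (f x)) :=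
      hfc.comp (tendsto_add_atTop_nat 1)
    have hpt : Tendsto (fun n => ((z (n + 1), g (z n) - f (z (n + 1))) : X × Y))
        atTop (nhds (x, g x - f x)) :=
      hz1.prodMk_nhds (hgc.sub hf1)
    exact hcl.mem_of_tendsto hpt (Filter.Eventually.of_forall hmem)
  refine ⟨x, hx_xs, ?_⟩
  have heq : g x - f x = -(f u + L (x - u)) := by
    simp only [hg]; abel
  show -(f u + L (x - u)) ∈ F x
  rw [← heq]
  exact hlimmem
theorem newton_method_quadratic_convergence
    {X Y : Type*} [NormedAddCommGroup X] [NormedSpace ℝ X] [CompleteSpace X]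
    [NormedAddCommGroup Y] [NormedSpace ℝ Y] [CompleteSpace Y]
    (F : X → Set Y) (hcl : IsClosed {p : X × Y | p.2 ∈ F p.1})
    (f : X → Y) (xb : X)
    (hdiff : ∃ ε : ℝ, 0 < ε ∧ (∀ x ∈ ball xb ε, DifferentiableAt ℝ f x) ∧
      ContinuousOn (fderiv ℝ f) (ball xb ε))
    (hlip : ∃ lam δ₁ : ℝ, 0 < lam ∧ 0 < δ₁ ∧ ∀ x ∈ ball xb δ₁, ∀ x' ∈ ball xb δ₁,
      ‖fderiv ℝ f x - fderiv ℝ f x'‖ ≤ lam * ‖x - x'‖)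
    (hsol : -(f xb) ∈ F xb)
    (hreg : MetReg (fun x => (fun z => f x + z) '' F x) xb 0) :
    ∃ δ : ℝ, 0 < δ ∧
      ∀ xs : X, -(f xs) ∈ F xs → ‖xs - xb‖ < δ / 2 →
        ∀ u ∈ ball xb δ, ∃ x : ℕ → X,
          x 0 = u ∧
          (∀ k : ℕ, x k ∈ ball xb δ) ∧
          (∀ k : ℕ, -(f (x k) + fderiv ℝ f (x k) (x (k + 1) - x k)) ∈ F (x (k + 1))) ∧
          Tendsto x atTop (nhds xs) ∧
          (∃ γ : ℝ, 0 < γ ∧ ∀ k : ℕ,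
            ‖x (k + 1) - xs‖ ≤ γ * ‖x k - xs‖ ^ 2) := by
  classical
  obtain ⟨ε, hε, hd, -⟩ := hdiff
  obtain ⟨lam, δ₁, hlam, hδ₁, hl⟩ := hlip
  obtain ⟨τ, hτ, δr, hδr, hr⟩ := hreg
  set δ : ℝ := min (min ε δ₁) (min (min δr 1) (min (τ / (36 * lam)) (δr / (8 * lam))))
    with hδdef
  have hδ0 : 0 < δ := by positivity
  have hδε : δ ≤ ε := le_trans (min_le_left _ _) (min_le_left _ _)
  have hδδ₁ : δ ≤ δ₁ := le_trans (min_le_left _ _) (min_le_right _ _)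
  have hδδr : δ ≤ δr :=
    le_trans (min_le_right _ _) (le_trans (min_le_left _ _) (min_le_left _ _))
  have hδ1 : δ ≤ 1 :=
    le_trans (min_le_right _ _) (le_trans (min_le_left _ _) (min_le_right _ _))
  have hδτ : δ ≤ τ / (36 * lam) :=
    le_trans (min_le_right _ _) (le_trans (min_le_right _ _) (min_le_left _ _))
  have hδr8 : δ ≤ δr / (8 * lam) :=
    le_trans (min_le_right _ _) (le_trans (min_le_right _ _) (min_le_right _ _))
  have h36 : 36 * lam * δ ≤ τ := by
    rw [le_div_iff₀ (by positivity)] at hδτ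
    nlinarith [hδτ]
  have h8 : 8 * lam * δ ≤ δr := by
    rw [le_div_iff₀ (by positivity)] at hδr8
    nlinarith [hδr8]
  have hc1 : 2 * lam * δ ≤ τ / 4 := by linarith
  have hc2 : 6 * lam * δ / τ ≤ 1 / 6 := by
    rw [div_le_div_iff₀ hτ (by norm_num : (0:ℝ) < 6)]
    linarith
  have hc3 : 4 * lam * δ ^ 2 < δr := by
    nlinarith [mul_le_mul_of_nonneg_right h8 hδ0.le,
      mul_le_mul_of_nonneg_left hδ1 hδr.le]
  have hdiff' : ∀ x ∈ ball xb δ, DifferentiableAt ℝ f x :=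
    fun x hx => hd x (ball_subset_ball hδε hx)
  have hlip' : ∀ x ∈ ball xb δ, ∀ x' ∈ ball xb δ,
      ‖fderiv ℝ f x - fderiv ℝ f x'‖ ≤ lam * ‖x - x'‖ :=
    fun x hx x' hx' => hl x (ball_subset_ball hδδ₁ hx) x' (ball_subset_ball hδδ₁ hx')
  refine ⟨δ, hδ0, ?_⟩
  intro xs hxsF hxsn u hu
  have hxs : dist xs xb < δ / 2 := by rw [dist_eq_norm]; exact hxsn
  set O : ℕ → X → Prop := fun k p => p ∈ ball xb δ ∧ dist p xs ≤ (3 * δ / 2) * (1 / 6) ^ k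
    with hO
  have hbase : O 0 u := by
    refine ⟨hu, ?_⟩
    have h1 := dist_triangle u xb xs
    have h2 : dist u xb < δ := Metric.mem_ball.mp hu
    have h3 : dist xb xs < δ / 2 := by rw [dist_comm]; exact hxs
    simp only [pow_zero, mul_one]
    linarith
  have hstep : ∀ k p, O k p → ∃ q,
      (dist q xs ≤ (4 * lam / τ) * dist p xs ^ 2 ∧
        -(f p + fderiv ℝ f p (q - p)) ∈ F q) ∧ O (k + 1) q := by
    intro k p hp
    obtain ⟨hpb, hpd⟩ := hp
    have hpow1 : ((1:ℝ) / 6) ^ k ≤ 1 := pow_le_one₀ (by norm_num) (by norm_num)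
    have hpd' : dist p xs ≤ 3 * δ / 2 := by nlinarith [hpd]
    obtain ⟨q, hq1, hq2⟩ := newton_step_aux F hcl f xb τ δr lam δ hτ hlam hδ0 hδδr
      hdiff' hlip' hr hc1 hc2 hc3 xs hxsF hxs p hpb hpd'
    have hΓ32 : (4 * lam / τ) * (3 * δ / 2) ≤ 1 / 6 := by
      have heq : (4 * lam / τ) * (3 * δ / 2) = 6 * lam * δ / τ := by ring
      linarith [heq.le, heq.ge]
    have hΓ0 : (0:ℝ) ≤ 4 * lam / τ := by positivity
    have hd0 : (0:ℝ) ≤ dist p xs := dist_nonneg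
    have h1 : (4 * lam / τ) * dist p xs ^ 2 ≤ (1 / 6) * dist p xs := by
      nlinarith [mul_le_mul_of_nonneg_right
        (mul_le_mul_of_nonneg_left hpd' hΓ0) hd0,
        mul_le_mul_of_nonneg_right hΓ32 hd0]
    have hqd : dist q xs ≤ (3 * δ / 2) * (1 / 6) ^ (k + 1) := by
      have h2 : (1 / 6) * dist p xs ≤ (3 * δ / 2) * (1 / 6) ^ (k + 1) := by
        rw [pow_succ]
        nlinarith [hpd]
      linarith
    have hqb : q ∈ ball xb δ := by
      rw [Metric.mem_ball]
      have ht := dist_triangle q xs xb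
      have hp6 : ((1:ℝ) / 6) ^ (k + 1) ≤ 1 / 6 := by
        calc ((1:ℝ) / 6) ^ (k + 1) ≤ ((1:ℝ) / 6) ^ 1 :=
          pow_le_pow_of_le_one (by norm_num) (by norm_num) (by omega)
          _ = 1 / 6 := pow_one _
      nlinarith [hqd, hxs]
    exact ⟨q, ⟨hq1, hq2⟩, hqb, hqd⟩
  let St : ∀ k : ℕ, {p : X // O k p} → {p : X // O (k + 1) p} :=
    fun k s => ⟨Classical.choose (hstep k s.1 s.2),
      (Classical.choose_spec (hstep k s.1 s.2)).2⟩
  let c : ∀ k : ℕ, {p : X // O k p} := fun k => Nat.rec ⟨u, hbase⟩ St k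
  let xseq : ℕ → X := fun k => (c k).1
  have hx0 : xseq 0 = u := rfl
  have hrel : ∀ k, dist (xseq (k + 1)) xs ≤ (4 * lam / τ) * dist (xseq k) xs ^ 2 ∧
      -(f (xseq k) + fderiv ℝ f (xseq k) (xseq (k + 1) - xseq k)) ∈ F (xseq (k + 1)) :=
    fun k => (Classical.choose_spec (hstep k (c k).1 (c k).2)).1
  have hballs : ∀ k, xseq k ∈ ball xb δ := fun k => (c k).2.1
  have hdists : ∀ k, dist (xseq k) xs ≤ (3 * δ / 2) * (1 / 6) ^ k := fun k => (c k).2.2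
  refine ⟨xseq, hx0, hballs, fun k => (hrel k).2, ?_, ⟨4 * lam / τ, by positivity,
    fun k => ?_⟩⟩
  · rw [tendsto_iff_dist_tendsto_zero]
    have hg : Tendsto (fun k : ℕ => (3 * δ / 2) * (1 / 6 : ℝ) ^ k) atTop (nhds 0) := by
      have := tendsto_pow_atTop_nhds_zero_of_lt_one
        (by norm_num : (0:ℝ) ≤ 1 / 6) (by norm_num : (1:ℝ) / 6 < 1)
      simpa using this.const_mul (3 * δ / 2)
    exact squeeze_zero (fun k => dist_nonneg) hdists hg
  · have := (hrel k).1
    rw [dist_eq_norm, dist_eq_norm] at this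
    exact this


end
end

section
/- (Uniform regularity of partial linearizations) Let X, Y be Banach spaces, F : X ⇒ Y with closed graph, f : X → Y continuously Fréchet differentiable near x̄ with ∇f Lipschitz continuous at x̄, 0 ∈ f(x̄) + F(x̄), and suppose F + f is metrically regular at (x̄, 0). For each u ∈ X define Φ_u(x) := f(u) + ∇f(u)(x − u) + F(x). Then there exist τ > 0 and δ' > 0 such that τ·d(x, Φ_u⁻¹(0)) ≤ d(0, Φ_u(x)) for all u, x ∈ B_{δ'}(x̄). -/
open Metric EMetric ENNReal Set

noncomputable section

section

open Filter Topology

lemma key_iteration {X Y : Type*} [NormedAddCommGroup X] [NormedSpace ℝ X] [CompleteSpace X]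
    [NormedAddCommGroup Y]
    (G : X → Set Y) (xb : X) (τ μ ρ δ : ℝ)
    (hτ : 0 < τ) (hμ0 : 0 ≤ μ) (hμτ : μ ≤ τ / 4) (hρ : 0 ≤ ρ) (hρδ : ρ < δ)
    (hGcl : ∀ v ∈ closedBall xb ρ, IsClosed (G v))
    (hGseq : ∀ (z : ℕ → X) (y : ℕ → Y) (xs : X) (ys : Y),
      (∀ n, z n ∈ closedBall xb ρ) → (∀ n, y n ∈ G (z n)) →
      Tendsto z atTop (nhds xs) → Tendsto y atTop (nhds ys) → ys ∈ G xs)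
    (hreg : ∀ x ∈ ball xb δ, ∀ y ∈ ball (0:Y) δ,
      ENNReal.ofReal τ * infEdist x (SVInv G y) ≤ infEdist y (G x))
    (g : X → Y) (hgc : ContinuousOn g (closedBall xb ρ))
    (hglip : ∀ a ∈ closedBall xb ρ, ∀ b ∈ closedBall xb ρ, ‖g a - g b‖ ≤ μ * ‖a - b‖)
    (hgsmall : ∀ a ∈ closedBall xb ρ, ‖g a‖ < δ)
    (x₀ : X) (D : ℝ) (hD : 0 ≤ D) (hx₀ : dist x₀ xb + 4 * D / τ ≤ ρ)
    (w : Y) (hw : w ∈ G x₀) (hwD : dist (-(g x₀)) w ≤ D) :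
    ∃ xs, -(g xs) ∈ G xs ∧ dist x₀ xs ≤ 4 * D / τ := by
  -- one step of the iteration
  have step : ∀ v, ∃ v', v ∈ closedBall xb ρ → (G v).Nonempty →
      (-(g v) ∈ G v' ∧ dist v v' ≤ (2/τ) * (infEdist (-(g v)) (G v)).toReal) := by
    intro v
    by_cases hv : v ∈ closedBall xb ρ ∧ (G v).Nonempty
    · obtain ⟨hvb, z, hz⟩ := hv
      set y := -(g v) with hy
      have hyδ : y ∈ ball (0:Y) δ := by
        simpa [hy, Metric.mem_ball, dist_eq_norm] using hgsmall v hvb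
      have hfin : infEdist y (G v) ≠ ⊤ :=
        ((infEdist_le_edist_of_mem hz).trans_lt (edist_lt_top _ _)).ne
      rcases eq_or_ne (infEdist y (G v)) 0 with h0 | h0
      · refine ⟨v, fun _ _ => ⟨?_, ?_⟩⟩
        · have : y ∈ closure (G v) := mem_closure_iff_infEdist_zero.2 h0
          rwa [(hGcl v hvb).closure_eq] at this
        · simp
          positivity
      · have hvball : v ∈ ball xb δ := lt_of_le_of_lt (mem_closedBall.1 hvb) hρδ
        have hr := hreg v hvball y hyδ
        have hτne : ENNReal.ofReal τ ≠ 0 := by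
          simp [ENNReal.ofReal_eq_zero]; linarith
        have hA : infEdist v (SVInv G y) ≤ ENNReal.ofReal (1/τ) * infEdist y (G v) := by
          calc infEdist v (SVInv G y)
              = ENNReal.ofReal (1/τ) * (ENNReal.ofReal τ * infEdist v (SVInv G y)) := by
                rw [← mul_assoc, ← ENNReal.ofReal_mul (by positivity), one_div_mul_cancel hτ.ne',
                  ENNReal.ofReal_one, one_mul]
            _ ≤ ENNReal.ofReal (1/τ) * infEdist y (G v) := mul_le_mul_right hr _
        have hlt : infEdist v (SVInv G y) < ENNReal.ofReal (2/τ) * infEdist y (G v) := by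
          refine hA.trans_lt ?_
          refine ENNReal.mul_lt_mul_left h0 hfin ?_
          exact ENNReal.ofReal_lt_ofReal_iff_of_nonneg (by positivity) |>.2
            (by rw [div_lt_div_iff₀ hτ hτ]; linarith)
        obtain ⟨v', hv'S, hv'd⟩ := infEdist_lt_iff.1 hlt
        refine ⟨v', fun _ _ => ⟨hv'S, ?_⟩⟩
        have h1 : (edist v v').toReal ≤ (ENNReal.ofReal (2/τ) * infEdist y (G v)).toReal :=
          ENNReal.toReal_mono (by
            exact ENNReal.mul_ne_top (by simp) hfin) hv'd.le
        rw [ENNReal.toReal_mul, ENNReal.toReal_ofReal (by positivity)] at h1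
        simpa [dist_edist] using h1
    · exact ⟨v, fun h1 h2 => absurd ⟨h1, h2⟩ hv⟩
  choose nxt hnxt using step
  set x : ℕ → X := fun n => nxt^[n] x₀ with hxdef
  have hxsucc : ∀ n, x (n+1) = nxt (x n) := fun n => Function.iterate_succ_apply' nxt n x₀
  have hDτ : 0 ≤ 4 * D / τ := by positivity
  have inv : ∀ n, x n ∈ closedBall xb ρ ∧ (G (x n)).Nonempty ∧
      (infEdist (-(g (x n))) (G (x n))).toReal ≤ D * (1/2)^n ∧
      dist x₀ (x n) ≤ (4*D/τ) * (1 - (1/2)^n) := by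
    intro n
    induction n with
    | zero =>
      refine ⟨by simpa [hxdef] using le_trans (by linarith) hx₀, ⟨w, by simpa [hxdef] using hw⟩, ?_, by simp [hxdef]⟩
      have : infEdist (-(g (x 0))) (G (x 0)) ≤ edist (-(g x₀)) w := by
        exact infEdist_le_edist_of_mem (by simpa [hxdef] using hw)
      calc (infEdist (-(g (x 0))) (G (x 0))).toReal ≤ (edist (-(g x₀)) w).toReal :=
            ENNReal.toReal_mono (edist_ne_top _ _) this
        _ = dist (-(g x₀)) w := by rw [dist_edist]
        _ ≤ D := hwD
        _ = D * (1/2)^(0:ℕ) := by norm_num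
    | succ n ih =>
      obtain ⟨hball, hne, hd, hdist⟩ := ih
      obtain ⟨Hmem, Hd⟩ : -(g (x n)) ∈ G (x (n+1)) ∧
          dist (x n) (x (n+1)) ≤ (2/τ) * (infEdist (-(g (x n))) (G (x n))).toReal := by
        rw [hxsucc]; exact hnxt (x n) hball hne
      have hstep : dist (x n) (x (n+1)) ≤ (2/τ) * (D * (1/2)^n) := by
        refine Hd.trans ?_
        apply mul_le_mul_of_nonneg_left hd (by positivity)
      have hdist' : dist x₀ (x (n+1)) ≤ (4*D/τ) * (1 - (1/2)^(n+1)) := by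
        calc dist x₀ (x (n+1)) ≤ dist x₀ (x n) + dist (x n) (x (n+1)) := dist_triangle _ _ _
          _ ≤ (4*D/τ) * (1 - (1/2)^n) + (2/τ) * (D * (1/2)^n) := add_le_add hdist hstep
          _ = (4*D/τ) * (1 - (1/2)^(n+1)) := by ring
      have hball' : x (n+1) ∈ closedBall xb ρ := by
        rw [Metric.mem_closedBall]
        calc dist (x (n+1)) xb ≤ dist (x (n+1)) x₀ + dist x₀ xb := dist_triangle _ _ _
          _ ≤ (4*D/τ) * (1 - (1/2)^(n+1)) + dist x₀ xb := by
              rw [dist_comm]; exact add_le_add_left hdist' _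
          _ ≤ 4*D/τ + dist x₀ xb := by
              have h2 : (0:ℝ) < (1/2:ℝ)^(n+1) := by positivity
              nlinarith
          _ ≤ ρ := by linarith
      refine ⟨hball', ⟨_, Hmem⟩, ?_, hdist'⟩
      have h1 : infEdist (-(g (x (n+1)))) (G (x (n+1))) ≤ edist (-(g (x (n+1)))) (-(g (x n))) :=
        infEdist_le_edist_of_mem Hmem
      calc (infEdist (-(g (x (n+1)))) (G (x (n+1)))).toReal
          ≤ dist (-(g (x (n+1)))) (-(g (x n))) := by
            rw [dist_edist]; exact ENNReal.toReal_mono (edist_ne_top _ _) h1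
        _ = ‖g (x (n+1)) - g (x n)‖ := by
            rw [dist_neg_neg, dist_eq_norm]
        _ ≤ μ * ‖x (n+1) - x n‖ := hglip _ hball' _ hball
        _ = μ * dist (x n) (x (n+1)) := by rw [dist_comm, dist_eq_norm]
        _ ≤ μ * ((2/τ) * (D * (1/2)^n)) := by
            apply mul_le_mul_of_nonneg_left (Hd.trans (mul_le_mul_of_nonneg_left hd (by positivity))) hμ0
        _ ≤ (τ/4) * ((2/τ) * (D * (1/2)^n)) := by
            apply mul_le_mul_of_nonneg_right hμτ (by positivity)
        _ = D * (1/2)^(n+1) := by field_simp; ring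
  have hcau : CauchySeq x := by
    apply cauchySeq_of_le_geometric (1/2) (2*D/τ) (by norm_num)
    intro n
    obtain ⟨hball, hne, hd, _⟩ := inv n
    obtain ⟨_, Hd⟩ : -(g (x n)) ∈ G (x (n+1)) ∧
        dist (x n) (x (n+1)) ≤ (2/τ) * (infEdist (-(g (x n))) (G (x n))).toReal := by
      rw [hxsucc]; exact hnxt (x n) hball hne
    calc dist (x n) (x (n+1)) ≤ (2/τ) * (D * (1/2)^n) :=
          Hd.trans (mul_le_mul_of_nonneg_left hd (by positivity))
      _ = (2*D/τ) * (1/2)^n := by ring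
  obtain ⟨xs, hxs⟩ := cauchySeq_tendsto_of_complete hcau
  have hxsball : xs ∈ closedBall xb ρ :=
    Metric.isClosed_closedBall.mem_of_tendsto hxs (Filter.Eventually.of_forall fun n => (inv n).1)
  have hdistxs : dist x₀ xs ≤ 4*D/τ := by
    refine le_of_tendsto (tendsto_const_nhds.dist hxs) (Filter.Eventually.of_forall fun n => ?_)
    calc dist x₀ (x n) ≤ (4*D/τ) * (1 - (1/2)^n) := (inv n).2.2.2
      _ ≤ 4*D/τ := by
          have h2 : (0:ℝ) < (1/2:ℝ)^n := by positivity
          nlinarith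
  have hgtend : Tendsto (fun n => -(g (x n))) atTop (nhds (-(g xs))) := by
    apply Tendsto.neg
    have : Tendsto x atTop (𝓝[closedBall xb ρ] xs) :=
      tendsto_nhdsWithin_iff.2 ⟨hxs, Filter.Eventually.of_forall fun n => (inv n).1⟩
    exact ((hgc xs hxsball).tendsto).comp this
  have hmem : -(g xs) ∈ G xs := by
    apply hGseq (fun n => x (n+1)) (fun n => -(g (x n))) xs (-(g xs))
      (fun n => (inv (n+1)).1)
      (fun n => by
        have := hnxt (x n) (inv n).1 (inv n).2.1
        rw [← hxsucc] at this
        exact this.1)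
      (hxs.comp (Filter.tendsto_add_atTop_nat 1))
      hgtend
  exact ⟨xs, hmem, hdistxs⟩


set_option maxHeartbeats 1000000 in
theorem uniform_regularity_of_partial_linearizations
    {X Y : Type*} [NormedAddCommGroup X] [NormedSpace ℝ X] [CompleteSpace X]
    [NormedAddCommGroup Y] [NormedSpace ℝ Y] [CompleteSpace Y]
    (F : X → Set Y) (hcl : IsClosed {p : X × Y | p.2 ∈ F p.1})
    (f : X → Y) (xb : X)
    (hdiff : ∃ ε : ℝ, 0 < ε ∧ (∀ x ∈ ball xb ε, DifferentiableAt ℝ f x) ∧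
      ContinuousOn (fderiv ℝ f) (ball xb ε))
    (hlip : ∃ lam δ₁ : ℝ, 0 < lam ∧ 0 < δ₁ ∧ ∀ x ∈ ball xb δ₁, ∀ x' ∈ ball xb δ₁,
      ‖fderiv ℝ f x - fderiv ℝ f x'‖ ≤ lam * ‖x - x'‖)
    (hsol : -(f xb) ∈ F xb)
    (hreg : MetReg (fun x => (fun z => f x + z) '' F x) xb 0) :
    ∃ τ : ℝ, 0 < τ ∧ ∃ δ' : ℝ, 0 < δ' ∧
      ∀ u ∈ ball xb δ', ∀ x ∈ ball xb δ',
        ENNReal.ofReal τ *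
            infEdist x (SVInv (fun v => (fun w => f u + fderiv ℝ f u (v - u) + w) '' F v) 0) ≤
          infEdist 0 ((fun w => f u + fderiv ℝ f u (x - u) + w) '' F x) := by
  obtain ⟨ε₀, hε₀, hdiffb, hfcont⟩ := hdiff
  obtain ⟨lam, δ₁, hlam, hδ₁, hlipb⟩ := hlip
  set G : X → Set Y := fun v => (fun z => f v + z) '' F v with hGdef
  obtain ⟨τ, hτ, δ, hδ, hP⟩ := hreg
  set ρ : ℝ := min (min (ε₀/2) (δ₁/2)) (min (min (δ/2) (δ/τ)) (τ/(8*lam))) with hρdef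
  have hρ0 : 0 < ρ := by positivity
  have hρε : ρ ≤ ε₀/2 := le_trans (min_le_left _ _) (min_le_left _ _)
  have hρ1 : ρ ≤ δ₁/2 := le_trans (min_le_left _ _) (min_le_right _ _)
  have hρ2 : ρ ≤ δ/2 := le_trans (min_le_right _ _) (le_trans (min_le_left _ _) (min_le_left _ _))
  have hρ3 : ρ ≤ δ/τ := le_trans (min_le_right _ _) (le_trans (min_le_left _ _) (min_le_right _ _))
  have hρ4 : ρ ≤ τ/(8*lam) := le_trans (min_le_right _ _) (min_le_right _ _)
  have hρδ : ρ < δ := lt_of_le_of_lt hρ2 (by linarith)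
  set μ : ℝ := 2*lam*ρ with hμdef
  have hμ0 : 0 < μ := by positivity
  have hμτ : μ ≤ τ/4 := by
    rw [hμdef]
    rw [le_div_iff₀ (by positivity)] at hρ4
    nlinarith
  have hρτδ : (τ/2) * ρ ≤ δ/2 := by
    rw [le_div_iff₀ hτ] at hρ3
    nlinarith
  have hlamρ : 2*lam*ρ ≤ μ := hμdef.ge
  have hμ2ρ : μ*(2*ρ) ≤ (τ/2)*ρ := by
    rw [hμdef]
    rw [le_div_iff₀ (by positivity)] at hρ4
    nlinarith
  clear_value ρ μ
  have hsubε : closedBall xb ρ ⊆ ball xb ε₀ := closedBall_subset_ball (by linarith)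
  have hsub1 : closedBall xb ρ ⊆ ball xb δ₁ := closedBall_subset_ball (by linarith)
  -- slices of G are closed
  have hGcl : ∀ v ∈ closedBall xb ρ, IsClosed (G v) := by
    intro v _
    have hFv : IsClosed (F v) := by
      have : F v = (fun w => ((v, w) : X × Y)) ⁻¹' {p : X × Y | p.2 ∈ F p.1} := rfl
      rw [this]
      exact hcl.preimage (continuous_const.prodMk continuous_id)
    have := (Homeomorph.addLeft (f v)).isClosedMap (F v) hFv
    simpa [hGdef, Homeomorph.addLeft] using this
  -- the graph of G is sequentially closed over the closed ball
  have hGseq : ∀ (z : ℕ → X) (y : ℕ → Y) (xs : X) (ys : Y),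
      (∀ n, z n ∈ closedBall xb ρ) → (∀ n, y n ∈ G (z n)) →
      Tendsto z atTop (nhds xs) → Tendsto y atTop (nhds ys) → ys ∈ G xs := by
    intro z y xs ys hzball hyG hz hy
    have hxsball : xs ∈ closedBall xb ρ :=
      Metric.isClosed_closedBall.mem_of_tendsto hz (Eventually.of_forall hzball)
    have hfx : Tendsto (fun n => f (z n)) atTop (nhds (f xs)) :=
      ((hdiffb xs (hsubε hxsball)).continuousAt.tendsto).comp hz
    have hw : ∀ n, y n - f (z n) ∈ F (z n) := by
      intro n
      obtain ⟨w, hwF, hfw⟩ := hyG n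
      have : w = y n - f (z n) := by rw [← hfw]; simp
      rwa [← this]
    have htend : Tendsto (fun n => ((z n, y n - f (z n)) : X × Y)) atTop
        (nhds (xs, ys - f xs)) := hz.prodMk_nhds (hy.sub hfx)
    have hmem := hcl.mem_of_tendsto htend (Eventually.of_forall fun n => hw n)
    exact ⟨ys - f xs, hmem, by simp⟩
  refine ⟨τ/8, by positivity, ρ/2, by positivity, ?_⟩
  intro u hu x hx
  have hub : u ∈ closedBall xb ρ :=
    mem_closedBall.2 (le_trans (mem_ball.1 hu).le (by linarith))
  have hxb2 : x ∈ closedBall xb ρ :=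
    mem_closedBall.2 (le_trans (mem_ball.1 hx).le (by linarith))
  set A := fderiv ℝ f u with hA
  set g : X → Y := fun v => f u + A (v - u) - f v with hg
  -- Lipschitz property of g
  have hglip : ∀ a ∈ closedBall xb ρ, ∀ b ∈ closedBall xb ρ, ‖g a - g b‖ ≤ μ * ‖a - b‖ := by
    intro a ha b hb
    set φ : X → Y := fun v => f v - A v with hφ
    have hder : ∀ ξ ∈ closedBall xb ρ,
        HasFDerivWithinAt φ (fderiv ℝ f ξ - A) (closedBall xb ρ) ξ := by
      intro ξ hξ
      exact ((hdiffb ξ (hsubε hξ)).hasFDerivAt.sub A.hasFDerivAt).hasFDerivWithinAt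
    have hbound : ∀ ξ ∈ closedBall xb ρ, ‖fderiv ℝ f ξ - A‖ ≤ μ := by
      intro ξ hξ
      refine le_trans (hlipb ξ (hsub1 hξ) u (hsub1 hub)) ?_
      have h1 : ‖ξ - u‖ ≤ 2 * ρ := by
        calc ‖ξ - u‖ = dist ξ u := (dist_eq_norm _ _).symm
          _ ≤ dist ξ xb + dist xb u := dist_triangle _ _ _
          _ ≤ ρ + ρ := add_le_add (mem_closedBall.1 hξ)
              (by rw [dist_comm]; exact mem_closedBall.1 hub)
          _ = 2 * ρ := by ring
      calc lam * ‖ξ - u‖ ≤ lam * (2 * ρ) := mul_le_mul_of_nonneg_left h1 hlam.le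
        _ = 2 * lam * ρ := by ring
        _ ≤ μ := hlamρ
    have hmvt := Convex.norm_image_sub_le_of_norm_hasFDerivWithin_le hder hbound
      (convex_closedBall xb ρ) hb ha
    have hkey : g a - g b = φ b - φ a := by
      simp only [hg, hφ, map_sub]
      abel
    rw [hkey, norm_sub_rev]
    exact hmvt
  have hgu : g u = 0 := by simp [hg]
  have hgsmall : ∀ a ∈ closedBall xb ρ, ‖g a‖ < δ := by
    intro a ha
    have h1 : ‖g a‖ ≤ μ * ‖a - u‖ := by
      have := hglip a ha u hub
      rwa [hgu, sub_zero] at this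
    have h2 : ‖a - u‖ ≤ 2 * ρ := by
      calc ‖a - u‖ = dist a u := (dist_eq_norm _ _).symm
        _ ≤ dist a xb + dist xb u := dist_triangle _ _ _
        _ ≤ ρ + ρ := add_le_add (mem_closedBall.1 ha)
            (by rw [dist_comm]; exact mem_closedBall.1 hub)
        _ = 2 * ρ := by ring
    have h3 : μ * ‖a - u‖ ≤ μ * (2 * ρ) := mul_le_mul_of_nonneg_left h2 hμ0.le
    linarith [hμ2ρ, hρτδ]
  have hgc : ContinuousOn g (closedBall xb ρ) := by
    have hfc : ContinuousOn f (closedBall xb ρ) := fun v hv =>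
      (hdiffb v (hsubε hv)).continuousAt.continuousWithinAt
    exact (continuousOn_const.add
      ((A.continuous.comp (continuous_id.sub continuous_const)).continuousOn)).sub hfc
  -- linearization is a translate of G
  have hΦ : ∀ v, (fun w => f u + fderiv ℝ f u (v - u) + w) '' F v
      = (fun z => g v + z) '' (G v) := by
    intro v
    rw [hGdef, Set.image_image]
    apply Set.image_congr'
    intro w
    simp only [hg, hA]
    abel
  have hS : SVInv (fun v => (fun w => f u + fderiv ℝ f u (v - u) + w) '' F v) 0
      = {v | -(g v) ∈ G v} := by
    ext v
    constructor
    · intro hv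
      have hv' : (0:Y) ∈ (fun z => g v + z) '' (G v) := by
        rw [← hΦ v]; exact hv
      obtain ⟨z, hz, e⟩ := hv'
      have hze : z = -(g v) := eq_neg_of_add_eq_zero_right e
      show -(g v) ∈ G v
      rw [← hze]; exact hz
    · intro hv
      show (0:Y) ∈ (fun w => f u + fderiv ℝ f u (v - u) + w) '' F v
      rw [hΦ v]
      exact ⟨-(g v), hv, by simp⟩
  have hdist0 : infEdist (0:Y) ((fun w => f u + fderiv ℝ f u (x - u) + w) '' F x)
      = infEdist (-(g x)) (G x) := by
    rw [hΦ x]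
    have hiso : Isometry (fun z : Y => g x + z) := isometry_add_left (g x)
    have h0 : (0:Y) = g x + (-(g x)) := by simp
    rw [h0]
    exact EMetric.infEdist_image hiso
  rw [hdist0, hS]
  clear_value A
  set d := infEdist (-(g x)) (G x) with hd
  apply ENNReal.le_of_forall_pos_le_add
  intro ε hε hdtop
  have hεR : (0:ℝ) < (ε:ℝ) := hε
  have hlt : d < d + (ε:ℝ≥0∞) := ENNReal.lt_add_right hdtop.ne (by exact_mod_cast hε.ne')
  obtain ⟨z, hzG, hze⟩ := infEdist_lt_iff.1 hlt
  clear_value d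
  set D' : ℝ := d.toReal + (ε:ℝ) with hD'
  have hD'0 : 0 ≤ D' := by positivity
  clear_value D'
  have hwD : dist (-(g x)) z ≤ D' := by
    have h1 : (edist (-(g x)) z).toReal ≤ (d + (ε:ℝ≥0∞)).toReal :=
      ENNReal.toReal_mono (by simp [hdtop.ne]) hze.le
    rw [ENNReal.toReal_add hdtop.ne (by simp), ← dist_edist] at h1
    simpa [hD'] using h1

  have hrhs : ENNReal.ofReal D' = d + (ε:ℝ≥0∞) := by
    rw [hD', ENNReal.ofReal_add ENNReal.toReal_nonneg hεR.le,
      ENNReal.ofReal_toReal hdtop.ne, ENNReal.ofReal_coe_nnreal]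
  by_cases hc : D' ≤ τ*ρ/8
  · -- short distance: iterate from x
    obtain ⟨xs, hxsS, hxsd⟩ := key_iteration G xb τ μ ρ δ hτ hμ0.le hμτ hρ0.le hρδ
      hGcl hGseq hP g hgc hglip hgsmall x D' hD'0
      (by
        have h1 : 4 * D' / τ ≤ ρ/2 := by
          rw [div_le_iff₀ hτ]
          nlinarith
        have h2 : dist x xb ≤ ρ/2 := (mem_ball.1 hx).le
        linarith) z hzG hwD
    calc ENNReal.ofReal (τ/8) * infEdist x {v | -(g v) ∈ G v}
        ≤ ENNReal.ofReal (τ/8) * edist x xs :=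
          mul_le_mul_right (infEdist_le_edist_of_mem (show xs ∈ {v | -(g v) ∈ G v} from hxsS)) _
      _ = ENNReal.ofReal (τ/8) * ENNReal.ofReal (dist x xs) := by rw [edist_dist]
      _ = ENNReal.ofReal (τ/8 * dist x xs) := (ENNReal.ofReal_mul (by positivity)).symm
      _ ≤ ENNReal.ofReal D' := by
          apply ENNReal.ofReal_le_ofReal
          have h1 : τ/8 * dist x xs ≤ τ/8 * (4 * D' / τ) :=
            mul_le_mul_of_nonneg_left hxsd (by positivity)
          have h2 : τ/8 * (4 * D' / τ) = D'/2 := by field_simp; ring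
          linarith
      _ = d + (ε:ℝ≥0∞) := hrhs
  · -- long distance: produce a solution near xb
    push_neg at hc
    have h0G : (0:Y) ∈ G xb := ⟨-(f xb), hsol, by simp⟩
    have hgxb : dist (-(g xb)) 0 ≤ μ * (ρ/2) := by
      rw [dist_zero_right, norm_neg]
      have h1 : ‖g xb‖ ≤ μ * ‖xb - u‖ := by
        have := hglip xb (mem_closedBall_self hρ0.le) u hub
        rwa [hgu, sub_zero] at this
      have h2 : ‖xb - u‖ ≤ ρ/2 := by
        rw [← dist_eq_norm, dist_comm]
        exact (mem_ball.1 hu).le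
      calc ‖g xb‖ ≤ μ * ‖xb - u‖ := h1
        _ ≤ μ * (ρ/2) := mul_le_mul_of_nonneg_left h2 hμ0.le
    obtain ⟨xs, hxsS, hxsd⟩ := key_iteration G xb τ μ ρ δ hτ hμ0.le hμτ hρ0.le hρδ
      hGcl hGseq hP g hgc hglip hgsmall xb (μ * (ρ/2)) (by positivity)
      (by
        simp only [dist_self, zero_add]
        rw [div_le_iff₀ hτ]
        nlinarith) 0 h0G hgxb
    have hxsd' : dist xb xs ≤ ρ/2 := by
      refine hxsd.trans ?_
      rw [div_le_iff₀ hτ]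
      nlinarith
    have hxxs : dist x xs ≤ ρ := by
      calc dist x xs ≤ dist x xb + dist xb xs := dist_triangle _ _ _
        _ ≤ ρ/2 + ρ/2 := add_le_add (mem_ball.1 hx).le hxsd'
        _ = ρ := by ring
    calc ENNReal.ofReal (τ/8) * infEdist x {v | -(g v) ∈ G v}
        ≤ ENNReal.ofReal (τ/8) * edist x xs :=
          mul_le_mul_right (infEdist_le_edist_of_mem (show xs ∈ {v | -(g v) ∈ G v} from hxsS)) _
      _ = ENNReal.ofReal (τ/8) * ENNReal.ofReal (dist x xs) := by rw [edist_dist]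
      _ = ENNReal.ofReal (τ/8 * dist x xs) := (ENNReal.ofReal_mul (by positivity)).symm
      _ ≤ ENNReal.ofReal D' := by
          apply ENNReal.ofReal_le_ofReal
          have h1 : τ/8 * dist x xs ≤ τ/8 * ρ := mul_le_mul_of_nonneg_left hxxs (by positivity)
          have h2 : τ/8 * ρ = τ*ρ/8 := by ring
          linarith
      _ = d + (ε:ℝ≥0∞) := hrhs

end

end
end

section
/- (Set-valued contraction mapping principle) Let X be a complete metric space, Φ : X ⇒ X, x ∈ X, θ ∈ (0,1), δ > 0. Suppose: (i) gph Φ ∩ [B̄_δ(x) × B̄_δ(x)] is closed; (ii) d(x, Φ(x)) < δ(1−θ); (iii) e(Φ(u) ∩ B_δ(x), Φ(v)) ≤ θ·d(u,v) for all u, v ∈ B̄_δ(x). Then there exists x̂ ∈ B̄_δ(x) with x̂ ∈ Φ(x̂). Moreover, if Φ is single-valued then x̂ is the unique fixed point in B̄_δ(x). -/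
open Metric EMetric ENNReal Set

noncomputable section
open scoped Classical

/-- The excess of `A` beyond `B`: `e(A,B) = sup_{a ∈ A} d(a, B)`,
with `e(∅,B) = 0` for `B ≠ ∅` and `e(∅,∅) = +∞`. -/
def excess {X : Type*} [MetricSpace X] (A B : Set X) : ℝ≥0∞ :=
  if A = ∅ then (if B = ∅ then ⊤ else 0) else ⨆ a ∈ A, infEdist a B

theorem infEdist_le_excess {X : Type*} [MetricSpace X] {A B : Set X} {a : X} (ha : a ∈ A) :
    infEdist a B ≤ excess A B := by
  rw [excess, if_neg (Set.nonempty_iff_ne_empty.1 ⟨a, ha⟩)]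
  exact le_biSup (fun a => infEdist a B) ha

/-- The iteration sequence. -/
noncomputable def contrSeq {X : Type*} [MetricSpace X] (Φ : X → Set X) (x : X) (θ δ : ℝ) :
    ℕ → X
  | 0 => x
  | (k+1) =>
    let xk := contrSeq Φ x θ δ k
    if h : ∃ z ∈ Φ xk, edist xk z < ENNReal.ofReal (δ * (1 - θ) * θ ^ k) then h.choose else xk

theorem contrSeq_succ_spec {X : Type*} [MetricSpace X] (Φ : X → Set X) (x : X) (θ δ : ℝ)
    (k : ℕ) (h : infEdist (contrSeq Φ x θ δ k) (Φ (contrSeq Φ x θ δ k))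
      < ENNReal.ofReal (δ * (1 - θ) * θ ^ k)) :
    contrSeq Φ x θ δ (k+1) ∈ Φ (contrSeq Φ x θ δ k) ∧
      dist (contrSeq Φ x θ δ k) (contrSeq Φ x θ δ (k+1)) < δ * (1 - θ) * θ ^ k := by
  rw [EMetric.infEdist, infEDist_lt_iff] at h
  obtain ⟨z, hz, hdz⟩ := h
  have hex : ∃ z ∈ Φ (contrSeq Φ x θ δ k),
      edist (contrSeq Φ x θ δ k) z < ENNReal.ofReal (δ * (1 - θ) * θ ^ k) := ⟨z, hz, hdz⟩
  have : contrSeq Φ x θ δ (k+1) = hex.choose := by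
    simp only [contrSeq, dif_pos hex]
  rw [this]
  obtain ⟨h1, h2⟩ := hex.choose_spec
  exact ⟨h1, edist_lt_ofReal.1 h2⟩

theorem set_valued_contraction_principle
    {X : Type*} [MetricSpace X] [CompleteSpace X]
    (Φ : X → Set X) (x : X) (θ : ℝ) (hθ : θ ∈ Set.Ioo (0 : ℝ) 1) (δ : ℝ) (hδ : 0 < δ)
    (h₁ : IsClosed ({p : X × X | p.2 ∈ Φ p.1} ∩ (closedBall x δ ×ˢ closedBall x δ)))
    (h₂ : infEdist x (Φ x) < ENNReal.ofReal (δ * (1 - θ)))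
    (h₃ : ∀ u ∈ closedBall x δ, ∀ v ∈ closedBall x δ,
      excess (Φ u ∩ ball x δ) (Φ v) ≤ ENNReal.ofReal θ * edist u v) :
    (∃ xh ∈ closedBall x δ, xh ∈ Φ xh) ∧
    ((∀ u : X, ∃ z : X, Φ u = {z}) →
      ∃! xh : X, xh ∈ closedBall x δ ∧ xh ∈ Φ xh) := by
  obtain ⟨hθ0, hθ1⟩ := hθ
  set D : ℝ := δ * (1 - θ) with hD
  have hD0 : 0 < D := mul_pos hδ (by linarith)
  set f : ℕ → X := contrSeq Φ x θ δ with hf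
  have hf0 : f 0 = x := rfl
  -- main invariant
  have key : ∀ k : ℕ, f (k+1) ∈ Φ (f k) ∧ dist (f k) (f (k+1)) < D * θ ^ k ∧
      dist x (f k) ≤ δ * (1 - θ ^ k) := by
    intro k
    induction k with
    | zero =>
      have h0 := contrSeq_succ_spec Φ x θ δ 0 (by rw [pow_zero, mul_one]; exact h₂)
      refine ⟨h0.1, ?_, by simp [hf0]⟩
      exact h0.2
    | succ k ih =>
      obtain ⟨hmem, hdist, hballk⟩ := ih
      have hθk : (0:ℝ) < θ ^ k := pow_pos hθ0 k
      have hθk1 : (0:ℝ) < θ ^ (k+1) := pow_pos hθ0 _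
      have hball1 : dist x (f (k+1)) ≤ δ * (1 - θ ^ (k+1)) := by
        calc dist x (f (k+1)) ≤ dist x (f k) + dist (f k) (f (k+1)) := dist_triangle _ _ _
        _ ≤ δ * (1 - θ ^ k) + D * θ ^ k := by linarith
        _ = δ * (1 - θ ^ (k+1)) := by rw [hD]; ring
      have hballk' : f k ∈ closedBall x δ := by
        rw [Metric.mem_closedBall, dist_comm]
        nlinarith
      have hball1' : f (k+1) ∈ closedBall x δ := by
        rw [Metric.mem_closedBall, dist_comm]
        nlinarith
      have hball1'' : f (k+1) ∈ ball x δ := by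
        rw [Metric.mem_ball, dist_comm]
        nlinarith
      -- infEdist bound at k+1
      have hexc := h₃ (f k) hballk' (f (k+1)) hball1'
      have hle : infEdist (f (k+1)) (Φ (f (k+1))) ≤ ENNReal.ofReal θ * edist (f k) (f (k+1)) :=
        le_trans (infEdist_le_excess (A := Φ (f k) ∩ ball x δ) (B := Φ (f (k+1)))
          ⟨hmem, hball1''⟩) hexc
      have hlt : infEdist (f (k+1)) (Φ (f (k+1))) < ENNReal.ofReal (D * θ ^ (k+1)) := by
        refine lt_of_le_of_lt hle ?_
        have : edist (f k) (f (k+1)) < ENNReal.ofReal (D * θ ^ k) := edist_lt_ofReal.2 hdist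
        calc ENNReal.ofReal θ * edist (f k) (f (k+1))
            < ENNReal.ofReal θ * ENNReal.ofReal (D * θ ^ k) := by
              refine (ENNReal.mul_lt_mul_iff_right ?_ ENNReal.ofReal_ne_top).2 this
              simpa using hθ0
          _ = ENNReal.ofReal (θ * (D * θ ^ k)) := (ENNReal.ofReal_mul hθ0.le).symm
          _ = ENNReal.ofReal (D * θ ^ (k+1)) := by ring_nf
      have hstep := contrSeq_succ_spec Φ x θ δ (k+1) hlt
      exact ⟨hstep.1, hstep.2, hball1⟩
  have hdistk : ∀ k, dist (f k) (f (k+1)) ≤ D * θ ^ k := fun k => (key k).2.1.le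
  have hcauchy : CauchySeq f := cauchySeq_of_le_geometric θ D hθ1 hdistk
  obtain ⟨xh, hxh⟩ := cauchySeq_tendsto_of_complete hcauchy
  -- x̂ is in the open ball
  have htail : dist (f 1) xh ≤ D * θ ^ 1 / (1 - θ) :=
    dist_le_of_le_geometric_of_tendsto θ D hθ1 hdistk hxh 1
  have hxball : xh ∈ ball x δ := by
    have h1 : dist x (f 1) < D := by
      have := (key 0).2.1; exact (by simpa using this : dist (f 0) (f 1) < D)
    have : dist x xh ≤ dist x (f 1) + dist (f 1) xh := dist_triangle _ _ _
    rw [Metric.mem_ball, dist_comm]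
    have h1θ : (1:ℝ) - θ ≠ 0 := by linarith
    have hDθ : D * θ ^ 1 / (1 - θ) = δ * θ := by
      rw [hD, pow_one, mul_comm δ, mul_assoc, mul_comm, mul_div_assoc,
        div_self h1θ, mul_one]
    rw [hDθ] at htail
    nlinarith
  have hxcball : xh ∈ closedBall x δ := ball_subset_closedBall hxball
  -- membership in graph via closedness
  have hmemk : ∀ k, f k ∈ closedBall x δ := by
    intro k
    have := (key k).2.2
    have hθk : (0:ℝ) < θ ^ k := pow_pos hθ0 k
    rw [Metric.mem_closedBall, dist_comm]
    nlinarith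
  have hfix : xh ∈ Φ xh := by
    have hpair : Filter.Tendsto (fun k => (f k, f (k+1))) Filter.atTop (nhds (xh, xh)) :=
      (hxh.prodMk_nhds (hxh.comp (Filter.tendsto_add_atTop_nat 1)))
    have hmem : ∀ k, (f k, f (k+1)) ∈
        ({p : X × X | p.2 ∈ Φ p.1} ∩ (closedBall x δ ×ˢ closedBall x δ)) := by
      intro k
      exact ⟨(key k).1, hmemk k, hmemk (k+1)⟩
    have := h₁.mem_of_tendsto hpair (Filter.Eventually.of_forall hmem)
    exact this.1
  refine ⟨⟨xh, hxcball, hfix⟩, ?_⟩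
  intro hsv
  refine ⟨xh, ⟨hxcball, hfix⟩, ?_⟩
  rintro y ⟨hycball, hyfix⟩
  -- y = xh
  obtain ⟨z, hz⟩ := hsv y
  have hy : Φ y = {y} := by
    rw [hz] at hyfix ⊢
    simp_all
  have hexc := h₃ xh hxcball y hycball
  have hle : infEdist xh (Φ y) ≤ ENNReal.ofReal θ * edist xh y :=
    le_trans (infEdist_le_excess (A := Φ xh ∩ ball x δ) (B := Φ y) ⟨hfix, hxball⟩) hexc
  rw [hy, EMetric.infEdist, infEDist_singleton] at hle
  by_contra hne
  have hne' : edist xh y ≠ 0 := fun h => hne (edist_eq_zero.1 h).symm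
  have hlt : ENNReal.ofReal θ * edist xh y < 1 * edist xh y := by
    rw [ENNReal.mul_lt_mul_iff_left hne' (edist_ne_top _ _)]
    exact ENNReal.ofReal_lt_one.2 hθ1
  rw [one_mul] at hlt
  exact absurd hle (not_le.2 hlt)

end
end

section
/- (Key estimate in the proof of the Hölder Lyusternik–Graves theorem) Let X be a complete metric space, Y a linear space with shift-invariant metric, F : X ⇒ Y, (x̄,ȳ) ∈ gph F, f : X → Y with f(x̄) = 0, q ∈ (0,1], and τ > μ ≥ 0, γ > (τ−μ)⁻¹. Assume there exists δ > 0 such that: (a) τ·d(x,F⁻¹(y)) ≤ d(y,F(x))^q for all x ∈ B_δ(x̄), y ∈ B_δ(ȳ); (b) gph F ∩ [B̄_δ(x̄) × B̄_δ(ȳ)] is closed; (c) d(f(x),f(x'))^q ≤ μ·d(x,x') for all x, x' ∈ B̄_δ(x̄). Then there exists δ̂ > 0 such that d(x, (F+f)⁻¹(y)) ≤ γ·d(y, F(x)+f(x))^q for all x ∈ B_{δ̂}(x̄) and y ∈ B_{δ̂}(ȳ). In particular, F + f is metrically regular of order q at (x̄,ȳ) with constant γ⁻¹. -/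
open Metric EMetric ENNReal Set
open Filter

noncomputable section

/-- Recursive choice of a sequence satisfying a step relation. -/
theorem exists_seq_rec' {α : Type*} (P : ℕ → α → Prop) (R : ℕ → α → α → Prop) (a : α)
    (h0 : P 0 a) (ih : ∀ n b, P n b → ∃ c, P (n + 1) c ∧ R n b c) :
    ∃ u : ℕ → α, u 0 = a ∧ (∀ n, P n (u n)) ∧ ∀ n, R n (u n) (u (n + 1)) := by
  haveI : Nonempty α := ⟨a⟩
  choose! g hg1 hg2 using ih
  let u : ℕ → α := fun n => Nat.rec a (fun n b => g n b) n
  have hus : ∀ n, u (n + 1) = g n (u n) := fun n => rfl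
  have hP : ∀ n, P n (u n) := by
    intro n
    induction n with
    | zero => exact h0
    | succ n ihn => rw [hus]; exact hg1 n (u n) ihn
  exact ⟨u, rfl, hP, fun n => by rw [hus]; exact hg2 n (u n) (hP n)⟩

set_option maxHeartbeats 1000000 in
theorem hlg_core {X Y : Type*} [MetricSpace X] [CompleteSpace X]
    [AddCommGroup Y] [MetricSpace Y]
    (F : X → Set Y) (f : X → Y) (xb : X) (yb : Y)
    (q τ μ c δ δh K : ℝ)
    (hq0 : 0 < q) (hτ : 0 < τ) (hμ : 0 ≤ μ) (hcτ : τ⁻¹ < c)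
    (hθ1 : c * μ < 1)
    (hf0 : f xb = 0)
    (hsub : ∀ (a b y : Y), dist (y - a) (y - b) = dist a b)
    (hδ : 0 < δ) (hδh0 : 0 ≤ δh) (hK0 : 0 ≤ K)
    (hKb : δh + c / (1 - c * μ) * K ≤ δ / 2)
    (hμK : μ * (δh + c / (1 - c * μ) * K) ≤ (δ / 2) ^ q)
    (hareal : ∀ x' ∈ ball xb δ, ∀ y' ∈ ball yb δ, (F x').Nonempty →
      (SVInv F y').Nonempty ∧ τ * infDist x' (SVInv F y') ≤ infDist y' (F x') ^ q)
    (hcreal : ∀ x' ∈ closedBall xb δ, ∀ x'' ∈ closedBall xb δ,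
      dist (f x') (f x'') ^ q ≤ μ * dist x' x'')
    (hclosed : ∀ (u : ℕ → X) (v : ℕ → Y) (z : X) (w : Y),
      (∀ n, v n ∈ F (u n)) → (∀ n, u n ∈ closedBall xb δ) → (∀ n, v n ∈ closedBall yb δ) →
      Tendsto u atTop (nhds z) → Tendsto v atTop (nhds w) → w ∈ F z)
    (x : X) (y : Y) (hx : dist x xb ≤ δh) (hy : dist y yb < δ / 4)
    (hFx : (F x).Nonempty) (hDK : infDist (y - f x) (F x) ^ q ≤ K) :
    ∃ z : X, y - f z ∈ F z ∧ dist x z ≤ c / (1 - c * μ) * (infDist (y - f x) (F x) ^ q) := by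
  set θ := c * μ with hθdef
  clear_value θ
  have hc0 : 0 < c := lt_trans (inv_pos.2 hτ) hcτ
  have hθ0 : 0 ≤ θ := by rw [hθdef]; exact mul_nonneg hc0.le hμ
  have h1θ : 0 < 1 - θ := by linarith
  set γ' := c / (1 - θ) with hγ'def
  have hcγ' : c = γ' * (1 - θ) := by rw [hγ'def]; exact (div_mul_cancel₀ c h1θ.ne').symm
  clear_value γ'
  have hγ'0 : 0 ≤ γ' := by rw [hγ'def]; exact div_nonneg hc0.le h1θ.le
  set D : ℝ := infDist (y - f x) (F x) with hDdef
  set Dq : ℝ := D ^ q with hDqdef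
  clear_value Dq
  clear_value D
  have hD0 : 0 ≤ D := by rw [hDdef]; exact infDist_nonneg
  have hDq0 : 0 ≤ Dq := by rw [hDqdef]; exact Real.rpow_nonneg hD0 q
  have hγ'DqK : γ' * Dq ≤ γ' * K := mul_le_mul_of_nonneg_left hDK hγ'0
  -- balls facts
  have hzb : ∀ z : X, dist x z ≤ γ' * Dq → dist z xb ≤ δh + γ' * K := by
    intro z h
    calc dist z xb ≤ dist z x + dist x xb := dist_triangle _ _ _
      _ ≤ γ' * Dq + δh := by rw [dist_comm]; exact add_le_add h hx
      _ ≤ δh + γ' * K := by linarith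
  have hball : ∀ z : X, dist z xb ≤ δh + γ' * K → z ∈ ball xb δ := by
    intro z h
    have : dist z xb ≤ δ / 2 := h.trans hKb
    exact mem_ball.2 (by linarith)
  have hcball : ∀ z : X, dist z xb ≤ δh + γ' * K → z ∈ closedBall xb δ := by
    intro z h
    exact mem_closedBall.2 (by have := h.trans hKb; linarith)
  have hfz : ∀ z : X, dist z xb ≤ δh + γ' * K → dist (f z) (f xb) ≤ δ / 2 := by
    intro z h
    have h1 : dist (f z) (f xb) ^ q ≤ μ * dist z xb :=
      hcreal z (hcball z h) xb (mem_closedBall_self hδ.le)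
    have h2 : μ * dist z xb ≤ μ * (δh + γ' * K) := mul_le_mul_of_nonneg_left h hμ
    have h3 : dist (f z) (f xb) ^ q ≤ (δ / 2) ^ q := by linarith
    exact (Real.rpow_le_rpow_iff dist_nonneg (by linarith) hq0).1 h3
  have hgyb : ∀ z : X, dist z xb ≤ δh + γ' * K → dist (y - f z) yb ≤ 3 * δ / 4 := by
    intro z h
    have h1 : dist (y - f z) (y - f xb) = dist (f z) (f xb) := hsub _ _ _
    have h2 : dist (y - f xb) yb = dist y yb := by rw [hf0, sub_zero]
    calc dist (y - f z) yb ≤ dist (y - f z) (y - f xb) + dist (y - f xb) yb :=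
          dist_triangle _ _ _
      _ = dist (f z) (f xb) + dist y yb := by rw [h1, h2]
      _ ≤ δ / 2 + dist y yb := by linarith [hfz z h]
      _ ≤ 3 * δ / 4 := by linarith
  have hgball : ∀ z : X, dist z xb ≤ δh + γ' * K → (y - f z) ∈ ball yb δ := by
    intro z h
    exact mem_ball.2 (by linarith [hgyb z h])
  have hgcball : ∀ z : X, dist z xb ≤ δh + γ' * K → (y - f z) ∈ closedBall yb δ := by
    intro z h
    exact mem_closedBall.2 (by linarith [hgyb z h])
  -- zero-distance membership via closedness
  have hzero : ∀ x' ∈ ball xb δ, ∀ y' ∈ closedBall yb δ, (SVInv F y').Nonempty →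
      infDist x' (SVInv F y') = 0 → y' ∈ F x' := by
    intro x' hx' y' hy' hSne h0
    have hδx : 0 < δ - dist x' xb := by
      have := mem_ball.1 hx'; linarith
    have hpick : ∀ n : ℕ, ∃ w ∈ SVInv F y',
        dist x' w < min (1 / ((n : ℝ) + 1)) (δ - dist x' xb) := by
      intro n
      refine (infDist_lt_iff hSne).1 ?_
      rw [h0]
      exact lt_min (by positivity) hδx
    choose w hw1 hw2 using hpick
    have hwcb : ∀ n, w n ∈ closedBall xb δ := by
      intro n
      have h1 : dist x' (w n) < δ - dist x' xb := lt_of_lt_of_le (hw2 n) (min_le_right _ _)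
      have : dist (w n) xb ≤ dist (w n) x' + dist x' xb := dist_triangle _ _ _
      rw [dist_comm (w n) x'] at this
      exact mem_closedBall.2 (by linarith)
    have hwt : Tendsto w atTop (nhds x') := by
      rw [tendsto_iff_dist_tendsto_zero]
      apply squeeze_zero (fun n => dist_nonneg)
        (fun n => ?_) tendsto_one_div_add_atTop_nhds_zero_nat
      rw [dist_comm]
      exact le_of_lt (lt_of_lt_of_le (hw2 n) (min_le_left _ _))
    exact hclosed w (fun _ => y') x' y' (fun n => hw1 n) hwcb (fun _ => hy') hwt
      tendsto_const_nhds
  -- the invariant and step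
  set Inv : ℕ → X → Prop := fun k z =>
    dist x z ≤ γ' * Dq * (1 - θ ^ k) ∧ infDist (y - f z) (F z) ^ q ≤ θ ^ k * Dq ∧
      (F z).Nonempty with hInvdef
  set R : ℕ → X → X → Prop := fun k z z' =>
    (y - f z) ∈ F z' ∧ dist z z' ≤ c * Dq * θ ^ k with hRdef
  have hInv0 : Inv 0 x := by
    refine ⟨by simp, by rw [pow_zero, one_mul, hDqdef, hDdef], hFx⟩
  have hInvdistx : ∀ k z, Inv k z → dist x z ≤ γ' * Dq := by
    intro k z hz
    refine hz.1.trans ?_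
    have h1 : (0:ℝ) ≤ θ ^ k := pow_nonneg hθ0 k
    nlinarith [mul_nonneg hγ'0 hDq0]
  have hstep : ∀ k z, Inv k z → ∃ z', Inv (k + 1) z' ∧ R k z z' := by
    intro k z hz
    obtain ⟨hz1, hz2, hz3⟩ := hz
    have hxz : dist x z ≤ γ' * Dq := hInvdistx k z ⟨hz1, hz2, hz3⟩
    have hzxb : dist z xb ≤ δh + γ' * K := hzb z hxz
    obtain ⟨hSne, hreg⟩ := hareal z (hball z hzxb) (y - f z) (hgball z hzxb) hz3
    set Dk : ℝ := infDist (y - f z) (F z) with hDkdef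
    have hDk0 : 0 ≤ Dk := infDist_nonneg
    have hθk0 : (0:ℝ) ≤ θ ^ k := pow_nonneg hθ0 k
    have hθsucc : θ ^ (k+1) ≤ θ ^ k := pow_le_pow_of_le_one hθ0 hθ1.le (Nat.le_succ k)
    rcases eq_or_lt_of_le (Real.rpow_nonneg hDk0 q) with h0 | hpos
    · -- Dk ^ q = 0 : z itself works
      have hinf0 : infDist z (SVInv F (y - f z)) = 0 := by
        have h1 : τ * infDist z (SVInv F (y - f z)) ≤ τ * 0 := by
          rw [mul_zero, h0]; exact hreg
        exact le_antisymm ((mul_le_mul_iff_right₀ hτ).1 h1) infDist_nonneg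
      have hmem : (y - f z) ∈ F z :=
        hzero z (hball z hzxb) (y - f z) (hgcball z hzxb) hSne hinf0
      refine ⟨z, ⟨?_, ?_, ⟨_, hmem⟩⟩, hmem, ?_⟩
      · refine hz1.trans ?_
        have := mul_nonneg hγ'0 hDq0
        nlinarith
      · rw [← h0]
        positivity
      · simp only [dist_self]
        positivity
    · -- Dk ^ q > 0 : genuine step
      have hid : infDist z (SVInv F (y - f z)) < c * (Dk ^ q) := by
        have h1 : infDist z (SVInv F (y - f z)) ≤ τ⁻¹ * Dk ^ q := by
          rw [← le_div_iff₀' hτ] at hreg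
          rw [inv_mul_eq_div]
          exact hreg
        have h2 : τ⁻¹ * Dk ^ q < c * Dk ^ q := by
          exact mul_lt_mul_of_pos_right hcτ hpos
        linarith
      obtain ⟨z', hz'S, hdz'⟩ := (infDist_lt_iff hSne).1 hid
      have hz'F : (y - f z) ∈ F z' := hz'S
      have hstepd : dist z z' ≤ c * Dq * θ ^ k := by
        have : c * Dk ^ q ≤ c * (θ ^ k * Dq) :=
          mul_le_mul_of_nonneg_left hz2 hc0.le
        calc dist z z' ≤ c * Dk ^ q := hdz'.le
          _ ≤ c * (θ ^ k * Dq) := this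
          _ = c * Dq * θ ^ k := by ring
      have hdx' : dist x z' ≤ γ' * Dq * (1 - θ ^ (k + 1)) := by
        calc dist x z' ≤ dist x z + dist z z' := dist_triangle _ _ _
          _ ≤ γ' * Dq * (1 - θ ^ k) + c * Dq * θ ^ k := add_le_add hz1 hstepd
          _ = γ' * Dq * (1 - θ ^ (k + 1)) := by
              rw [hcγ', pow_succ]; ring
      have hx'γ : dist x z' ≤ γ' * Dq := by
        refine hdx'.trans ?_
        have h1 : (0:ℝ) ≤ θ ^ (k+1) := pow_nonneg hθ0 _
        nlinarith [mul_nonneg hγ'0 hDq0]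
      have hz'cb : z' ∈ closedBall xb δ := hcball z' (hzb z' hx'γ)
      have hzcb : z ∈ closedBall xb δ := hcball z hzxb
      have hnewD : infDist (y - f z') (F z') ^ q ≤ θ ^ (k + 1) * Dq := by
        have h1 : infDist (y - f z') (F z') ≤ dist (y - f z') (y - f z) :=
          infDist_le_dist_of_mem hz'F
        have h2 : dist (y - f z') (y - f z) = dist (f z') (f z) := hsub _ _ _
        have h3 : infDist (y - f z') (F z') ^ q ≤ dist (f z') (f z) ^ q := by
          apply Real.rpow_le_rpow infDist_nonneg _ hq0.le
          rw [← h2]; exact h1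
        have h4 : dist (f z') (f z) ^ q ≤ μ * dist z' z := hcreal z' hz'cb z hzcb
        have h5 : μ * dist z' z ≤ μ * (c * Dq * θ ^ k) := by
          apply mul_le_mul_of_nonneg_left _ hμ
          rw [dist_comm]; exact hstepd
        have h6 : μ * (c * Dq * θ ^ k) = θ ^ (k + 1) * Dq := by
          rw [pow_succ, hθdef]; ring
        linarith
      exact ⟨z', ⟨hdx', hnewD, ⟨_, hz'F⟩⟩, hz'F, hstepd⟩
  obtain ⟨z, hz0, hInvs, hRs⟩ := exists_seq_rec' Inv R x hInv0 hstep
  have hgeom : ∀ n, dist (z n) (z (n + 1)) ≤ c * Dq * θ ^ n := fun n => (hRs n).2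
  have hcauchy : CauchySeq z := cauchySeq_of_le_geometric θ (c * Dq) hθ1 hgeom
  obtain ⟨zlim, hlim⟩ := cauchySeq_tendsto_of_complete hcauchy
  have hdxlim : dist x zlim ≤ γ' * Dq := by
    have h1 : dist (z 0) zlim ≤ c * Dq / (1 - θ) :=
      dist_le_of_le_geometric_of_tendsto₀ θ (c * Dq) hθ1 hgeom hlim
    rw [hz0] at h1
    refine h1.trans (le_of_eq ?_)
    rw [hγ'def]; ring
  -- closed ball memberships
  have hzncb : ∀ n, z n ∈ closedBall xb δ := fun n =>
    hcball (z n) (hzb (z n) (hInvdistx n (z n) (hInvs n)))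
  have hzlimcb : zlim ∈ closedBall xb δ :=
    Metric.isClosed_closedBall.mem_of_tendsto hlim (Eventually.of_forall hzncb)
  -- f (z n) → f zlim
  have hfd : ∀ n, dist (f (z n)) (f zlim) ^ q ≤ μ * dist (z n) zlim := fun n =>
    hcreal (z n) (hzncb n) zlim hzlimcb
  have hft : Tendsto (fun n => f (z n)) atTop (nhds (f zlim)) := by
    rw [Metric.tendsto_atTop]
    intro ε hε
    have hεq : 0 < ε ^ q := Real.rpow_pos_of_pos hε q
    have hd : Tendsto (fun n => dist (z n) zlim) atTop (nhds 0) :=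
      tendsto_iff_dist_tendsto_zero.1 hlim
    have : ∀ᶠ n in atTop, μ * dist (z n) zlim < ε ^ q := by
      have hμd : Tendsto (fun n => μ * dist (z n) zlim) atTop (nhds 0) := by
        simpa using hd.const_mul μ
      exact (hμd.eventually (eventually_lt_nhds hεq)).mono (fun n h => by simpa using h)
    obtain ⟨N, hN⟩ := this.exists_forall_of_atTop
    refine ⟨N, fun n hn => ?_⟩
    have h1 : dist (f (z n)) (f zlim) ^ q < ε ^ q := lt_of_le_of_lt (hfd n) (hN n hn)
    exact (Real.rpow_lt_rpow_iff dist_nonneg hε.le hq0).1 h1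
  have hvt : Tendsto (fun n => y - f (z n)) atTop (nhds (y - f zlim)) := by
    rw [tendsto_iff_dist_tendsto_zero]
    have : (fun n => dist (y - f (z n)) (y - f zlim)) = fun n => dist (f (z n)) (f zlim) := by
      funext n; exact hsub _ _ _
    rw [this]
    exact tendsto_iff_dist_tendsto_zero.1 hft
  have hmem : (y - f zlim) ∈ F zlim := by
    apply hclosed (fun n => z (n + 1)) (fun n => y - f (z n)) zlim (y - f zlim)
      (fun n => (hRs n).1) (fun n => hzncb (n + 1))
      (fun n => hgcball (z n) (hzb (z n) (hInvdistx n (z n) (hInvs n)))) ?_ hvt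
    exact hlim.comp (tendsto_add_atTop_nat 1)
  exact ⟨zlim, hmem, hdxlim⟩

set_option maxHeartbeats 1000000 in
theorem key_estimate_holder_lyusternik_graves
    {X Y : Type*} [MetricSpace X] [CompleteSpace X]
    [AddCommGroup Y] [MetricSpace Y]
    (hshift : ∀ a b c : Y, dist (a + c) (b + c) = dist a b)
    (F : X → Set Y) (xb : X) (yb : Y) (hxy : yb ∈ F xb)
    (f : X → Y) (hf0 : f xb = 0) (q : ℝ) (hq0 : 0 < q) (hq1 : q ≤ 1)
    (τ μ γ : ℝ) (hμ : 0 ≤ μ) (hτμ : μ < τ) (hγ : (τ - μ)⁻¹ < γ)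
    (δ : ℝ) (hδ : 0 < δ)
    (ha : ∀ x ∈ ball xb δ, ∀ y ∈ ball yb δ,
      ENNReal.ofReal τ * infEdist x (SVInv F y) ≤ infEdist y (F x) ^ q)
    (hb : IsClosed ({p : X × Y | p.2 ∈ F p.1} ∩ (closedBall xb δ ×ˢ closedBall yb δ)))
    (hc : ∀ x ∈ closedBall xb δ, ∀ x' ∈ closedBall xb δ,
      edist (f x) (f x') ^ q ≤ ENNReal.ofReal μ * edist x x') :
    ∃ δh : ℝ, 0 < δh ∧ ∀ x ∈ ball xb δh, ∀ y ∈ ball yb δh,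
      infEdist x (SVInv (fun v => (fun z => z + f v) '' F v) y) ≤
        ENNReal.ofReal γ * infEdist y ((fun z => z + f x) '' F x) ^ q := by
  -- basic facts
  have hτ0 : 0 < τ := lt_of_le_of_lt hμ hτμ
  have hτμ0 : 0 < τ - μ := sub_pos.2 hτμ
  have hγ0 : 0 < γ := lt_trans (inv_pos.2 hτμ0) hγ
  have h1γμ : 0 < 1 + γ * μ := by positivity
  have hγτ : 1 + γ * μ < γ * τ := by
    have h1 := mul_lt_mul_of_pos_right hγ hτμ0
    rw [inv_mul_cancel₀ hτμ0.ne'] at h1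
    nlinarith
  have hcex : τ⁻¹ < γ / (1 + γ * μ) := by
    rw [inv_eq_one_div, div_lt_div_iff₀ hτ0 h1γμ]
    nlinarith
  obtain ⟨c, hc1, hc2⟩ := exists_between hcex
  have hc0 : 0 < c := lt_trans (inv_pos.2 hτ0) hc1
  have hcγ : c * (1 + γ * μ) < γ := (lt_div_iff₀ h1γμ).1 hc2
  have hθ1 : c * μ < 1 := by
    have h1 : c * μ * γ < 1 * γ := by nlinarith
    exact lt_of_mul_lt_mul_right h1 hγ0.le
  have h1θ : 0 < 1 - c * μ := by linarith
  set γ' := c / (1 - c * μ) with hγ'def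
  have hγ'0 : 0 ≤ γ' := div_nonneg hc0.le h1θ.le
  have hγ'γ : γ' < γ := by
    rw [hγ'def, div_lt_iff₀ h1θ]
    nlinarith
  -- choose δh
  set δh : ℝ := min (δ / 8) (min ((δ / (8 * γ)) ^ (1/q))
      (min ((δ / 2) ^ q / (4 * μ + 1)) (((δ / 2) ^ q / (2 * (μ * γ + 1))) ^ (1/q)))) with hδhdef
  have hδ2q : 0 < (δ / 2) ^ q := Real.rpow_pos_of_pos (by linarith) q
  have hδh0 : 0 < δh := by
    refine lt_min (by linarith) (lt_min ?_ (lt_min ?_ ?_))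
    · exact Real.rpow_pos_of_pos (by positivity) _
    · positivity
    · exact Real.rpow_pos_of_pos (by positivity) _
  have hrpow_inv : ∀ a : ℝ, 0 ≤ a → (a ^ (1/q)) ^ q = a := by
    intro a ha
    rw [← Real.rpow_mul ha, one_div, inv_mul_cancel₀ hq0.ne', Real.rpow_one]
  have hP2 : δh ≤ δ / 8 := min_le_left _ _
  have hP3 : γ * δh ^ q ≤ δ / 8 := by
    have h1 : δh ≤ (δ / (8 * γ)) ^ (1/q) := le_trans (min_le_right _ _) (min_le_left _ _)
    have h2 : δh ^ q ≤ δ / (8 * γ) := by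
      calc δh ^ q ≤ ((δ / (8 * γ)) ^ (1/q)) ^ q :=
            Real.rpow_le_rpow hδh0.le h1 hq0.le
        _ = δ / (8 * γ) := hrpow_inv _ (by positivity)
    calc γ * δh ^ q ≤ γ * (δ / (8 * γ)) := mul_le_mul_of_nonneg_left h2 hγ0.le
      _ = δ / 8 := by field_simp
  have hδhq0 : 0 ≤ δh ^ q := Real.rpow_nonneg hδh0.le q
  have hP4 : μ * (2 * δh + γ * δh ^ q) ≤ (δ / 2) ^ q := by
    have h4a : δh ≤ (δ / 2) ^ q / (4 * μ + 1) :=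
      le_trans (min_le_right _ _) (le_trans (min_le_right _ _) (min_le_left _ _))
    have h4b : δh ^ q ≤ (δ / 2) ^ q / (2 * (μ * γ + 1)) := by
      have h1 : δh ≤ ((δ / 2) ^ q / (2 * (μ * γ + 1))) ^ (1/q) :=
        le_trans (min_le_right _ _) (le_trans (min_le_right _ _) (min_le_right _ _))
      calc δh ^ q ≤ (((δ / 2) ^ q / (2 * (μ * γ + 1))) ^ (1/q)) ^ q :=
            Real.rpow_le_rpow hδh0.le h1 hq0.le
        _ = (δ / 2) ^ q / (2 * (μ * γ + 1)) := hrpow_inv _ (by positivity)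
    have h4a' : δh * (4 * μ + 1) ≤ (δ / 2) ^ q := by
      rw [← le_div_iff₀ (by positivity)]; exact h4a
    have h4b' : δh ^ q * (2 * (μ * γ + 1)) ≤ (δ / 2) ^ q := by
      rw [← le_div_iff₀ (by positivity)]; exact h4b
    nlinarith [mul_nonneg hμ hδh0.le, mul_nonneg hμ hδhq0, mul_nonneg hγ0.le hδhq0,
      mul_nonneg (mul_nonneg hμ hγ0.le) hδhq0]
  -- shift-invariance facts
  have hsub : ∀ (a b y : Y), dist (y - a) (y - b) = dist a b := by
    intro a b y
    have h1 := hshift (y - a) (y - b) (a + b)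
    have e1 : y - a + (a + b) = b + y := by abel
    have e2 : y - b + (a + b) = a + y := by abel
    rw [e1, e2, hshift b a y] at h1
    rw [← h1, dist_comm]
  -- real-valued versions of assumptions
  have hareal : ∀ x' ∈ ball xb δ, ∀ y' ∈ ball yb δ, (F x').Nonempty →
      (SVInv F y').Nonempty ∧ τ * infDist x' (SVInv F y') ≤ infDist y' (F x') ^ q := by
    intro x' hx' y' hy' hFne
    have h1 := ha x' hx' y' hy'
    have hfin : infEdist y' (F x') ≠ ⊤ := infEdist_ne_top hFne
    have heq : infEdist y' (F x') = ENNReal.ofReal (infDist y' (F x')) := by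
      rw [infDist]; exact (ENNReal.ofReal_toReal hfin).symm
    have hSne : (SVInv F y').Nonempty := by
      rcases eq_empty_or_nonempty (SVInv F y') with he | hne
      · exfalso
        rw [he, show infEdist x' (∅ : Set X) = ⊤ from infEdist_empty, ENNReal.mul_top (by
            simp [ENNReal.ofReal_eq_zero]; linarith)] at h1
        rw [heq, ENNReal.ofReal_rpow_of_nonneg infDist_nonneg hq0.le] at h1
        exact (ENNReal.ofReal_ne_top (top_le_iff.1 h1)).elim
      · exact hne
    refine ⟨hSne, ?_⟩
    have hfin2 : infEdist x' (SVInv F y') ≠ ⊤ := infEdist_ne_top hSne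
    rw [heq, ENNReal.ofReal_rpow_of_nonneg infDist_nonneg hq0.le,
      show infEdist x' (SVInv F y') = ENNReal.ofReal (infDist x' (SVInv F y')) by
        rw [infDist]; exact (ENNReal.ofReal_toReal hfin2).symm,
      ← ENNReal.ofReal_mul hτ0.le] at h1
    exact (ENNReal.ofReal_le_ofReal_iff (Real.rpow_nonneg infDist_nonneg q)).1 h1
  have hcreal : ∀ x' ∈ closedBall xb δ, ∀ x'' ∈ closedBall xb δ,
      dist (f x') (f x'') ^ q ≤ μ * dist x' x'' := by
    intro x' hx' x'' hx''
    have h1 := hc x' hx' x'' hx''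
    rw [edist_dist, edist_dist, ENNReal.ofReal_rpow_of_nonneg dist_nonneg hq0.le,
      ← ENNReal.ofReal_mul hμ] at h1
    exact (ENNReal.ofReal_le_ofReal_iff (mul_nonneg hμ dist_nonneg)).1 h1
  have hclosed : ∀ (u : ℕ → X) (v : ℕ → Y) (z : X) (w : Y),
      (∀ n, v n ∈ F (u n)) → (∀ n, u n ∈ closedBall xb δ) → (∀ n, v n ∈ closedBall yb δ) →
      Tendsto u atTop (nhds z) → Tendsto v atTop (nhds w) → w ∈ F z := by
    intro u v z w h1 h2 h3 hu hv
    have hmem : ∀ n, (u n, v n) ∈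
        ({p : X × Y | p.2 ∈ F p.1} ∩ (closedBall xb δ ×ˢ closedBall yb δ)) :=
      fun n => ⟨h1 n, h2 n, h3 n⟩
    have := hb.mem_of_tendsto (hu.prodMk_nhds hv) (Eventually.of_forall hmem)
    exact this.1
  -- the key constants
  set K : ℝ := δh / γ + δh ^ q with hKdef
  have hK0 : 0 ≤ K := add_nonneg (div_nonneg hδh0.le hγ0.le) hδhq0
  have hγK : γ * K = δh + γ * δh ^ q := by
    rw [hKdef]; field_simp
  have hγ'K : γ' * K ≤ γ * K := mul_le_mul_of_nonneg_right hγ'γ.le hK0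
  have haux : δh + γ' * K ≤ 2 * δh + γ * δh ^ q := by
    have := hγ'K; rw [hγK] at this; linarith
  have hKb : δh + γ' * K ≤ δ / 2 := by
    refine haux.trans ?_
    linarith
  have hμK : μ * (δh + γ' * K) ≤ (δ / 2) ^ q := by
    refine le_trans (mul_le_mul_of_nonneg_left haux hμ) hP4
  -- wrap up
  refine ⟨δh, hδh0, fun x hx y hy => ?_⟩
  have hxδ : dist x xb ≤ δh := (mem_ball.1 hx).le
  have hyδ : dist y yb < δ / 4 := lt_of_lt_of_le (mem_ball.1 hy) (by linarith)
  -- rewrite the inverse of F + f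
  have hSV : SVInv (fun v => (fun z => z + f v) '' F v) y = {z | y - f z ∈ F z} := by
    ext z
    simp only [SVInv, mem_setOf_eq, Set.mem_image]
    constructor
    · rintro ⟨w, hw, rfl⟩
      simpa [add_sub_cancel_right] using hw
    · intro h
      exact ⟨y - f z, h, by abel⟩
  -- rewrite the image distance
  have hiso : Isometry (fun z : Y => z + f x) :=
    Isometry.of_dist_eq (fun a b => hshift a b (f x))
  have hImg : infEdist y ((fun z => z + f x) '' F x) = infEdist (y - f x) (F x) := by
    have hy' : (fun z : Y => z + f x) (y - f x) = y := by
      show y - f x + f x = y; abel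
    conv_lhs => rw [← hy']
    exact infEDist_image hiso
  rcases eq_empty_or_nonempty (F x) with hFe | hFne
  · rw [hImg, hFe, show infEdist (y - f x) (∅ : Set Y) = ⊤ from infEdist_empty, ENNReal.top_rpow_of_pos hq0,
      ENNReal.mul_top (by simp [ENNReal.ofReal_eq_zero]; linarith)]
    exact le_top
  -- real distance quantities
  set D : ℝ := infDist (y - f x) (F x) with hDdef
  have hD0 : 0 ≤ D := infDist_nonneg
  have hDq0 : 0 ≤ D ^ q := Real.rpow_nonneg hD0 q
  have hRHS : ENNReal.ofReal γ * infEdist y ((fun z => z + f x) '' F x) ^ q =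
      ENNReal.ofReal (γ * D ^ q) := by
    rw [hImg, show infEdist (y - f x) (F x) = ENNReal.ofReal D by
        rw [hDdef, infDist]; exact (ENNReal.ofReal_toReal (infEdist_ne_top hFne)).symm,
      ENNReal.ofReal_rpow_of_nonneg hD0 hq0.le, ← ENNReal.ofReal_mul hγ0.le]
  rw [hRHS, hSV]
  -- two cases
  rcases le_or_gt (D ^ q) K with hcase | hcase
  · -- small defect: iterate from x
    obtain ⟨z, hzmem, hzd⟩ := hlg_core F f xb yb q τ μ c δ δh K hq0 hτ0 hμ hc1 hθ1 hf0
      hsub hδ hδh0.le hK0 hKb hμK hareal hcreal hclosed x y hxδ hyδ hFne hcase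
    refine le_trans (infEdist_le_edist_of_mem hzmem) ?_
    rw [edist_dist]
    apply ENNReal.ofReal_le_ofReal
    refine hzd.trans ?_
    exact mul_le_mul_of_nonneg_right hγ'γ.le hDq0
  · -- large defect: iterate from xb
    have hxbδ : dist xb xb ≤ δh := by simp [hδh0.le]
    have hFxb : (F xb).Nonempty := ⟨yb, hxy⟩
    have hDb : infDist (y - f xb) (F xb) ^ q ≤ K := by
      have h1 : infDist (y - f xb) (F xb) ≤ dist (y - f xb) yb := infDist_le_dist_of_mem hxy
      have h2 : dist (y - f xb) yb = dist y yb := by rw [hf0, sub_zero]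
      have h3 : infDist (y - f xb) (F xb) ≤ δh := by
        rw [h2] at h1
        exact h1.trans (mem_ball.1 hy).le
      calc infDist (y - f xb) (F xb) ^ q ≤ δh ^ q :=
            Real.rpow_le_rpow infDist_nonneg h3 hq0.le
        _ ≤ K := by rw [hKdef]; have : 0 ≤ δh / γ := div_nonneg hδh0.le hγ0.le; linarith
    obtain ⟨z, hzmem, hzd⟩ := hlg_core F f xb yb q τ μ c δ δh K hq0 hτ0 hμ hc1 hθ1 hf0
      hsub hδ hδh0.le hK0 hKb hμK hareal hcreal hclosed xb y hxbδ hyδ hFxb hDb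
    refine le_trans (infEdist_le_edist_of_mem hzmem) ?_
    rw [edist_dist]
    apply ENNReal.ofReal_le_ofReal
    have h1 : dist xb z ≤ γ' * δh ^ q := by
      refine hzd.trans ?_
      apply mul_le_mul_of_nonneg_left _ hγ'0
      calc infDist (y - f xb) (F xb) ^ q ≤ δh ^ q := by
            have h2 : dist (y - f xb) yb = dist y yb := by rw [hf0, sub_zero]
            refine Real.rpow_le_rpow infDist_nonneg ?_ hq0.le
            refine le_trans (infDist_le_dist_of_mem hxy) ?_
            rw [h2]; exact (mem_ball.1 hy).le
        _ = δh ^ q := rfl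
    calc dist x z ≤ dist x xb + dist xb z := dist_triangle _ _ _
      _ ≤ δh + γ' * δh ^ q := add_le_add hxδ h1
      _ ≤ δh + γ * δh ^ q := by nlinarith
      _ = γ * K := hγK.symm
      _ ≤ γ * D ^ q := mul_le_mul_of_nonneg_left hcase.le hγ0.le

end
end
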